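/- arXiv:cond-mat/9808046 — 9 statements merged into one kernel-verified Lean document; each statement's English description precedes it below -/
import Mathlib

section
/- For every real vector φ ∈ ℝ^N one has Re( h² φᵗ (L + hI + iα)^{-2} φ ) ≤ Re( h φᵗ (L + hI + iα)^{-1} φ ) ≤ φᵗφ, where φᵗMφ = Σ_{ij} φ_i M_{ij} φ_j. -/
open Matrix BigOperators

/-- For every real vector `φ`:
`Re(h² φᵗ (L+hI+iα)⁻² φ) ≤ Re(h φᵗ (L+hI+iα)⁻¹ φ) ≤ φᵗφ`. -/
theorem quadratic_form_inequalities (N : ℕ) (hN : 0 < N)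
    (L : Matrix (Fin N) (Fin N) ℝ) (hLsymm : L.IsSymm) (hLpsd : L.PosSemidef)
    (h : ℝ) (hh : 0 < h) (α : Fin N → ℝ) (φ : Fin N → ℝ) :
    ((h : ℂ) ^ 2 * ∑ i, ∑ j, (φ i : ℂ) *
        (((L.map (fun x => (x : ℂ)) + (h : ℂ) • 1
          + Complex.I • Matrix.diagonal (fun i => (α i : ℂ)))⁻¹
        * (L.map (fun x => (x : ℂ)) + (h : ℂ) • 1
          + Complex.I • Matrix.diagonal (fun i => (α i : ℂ)))⁻¹) i j) * (φ j : ℂ)).re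
      ≤ ((h : ℂ) * ∑ i, ∑ j, (φ i : ℂ) *
        ((L.map (fun x => (x : ℂ)) + (h : ℂ) • 1
          + Complex.I • Matrix.diagonal (fun i => (α i : ℂ)))⁻¹ i j) * (φ j : ℂ)).re
    ∧ ((h : ℂ) * ∑ i, ∑ j, (φ i : ℂ) *
        ((L.map (fun x => (x : ℂ)) + (h : ℂ) • 1
          + Complex.I • Matrix.diagonal (fun i => (α i : ℂ)))⁻¹ i j) * (φ j : ℂ)).re
      ≤ ∑ i, φ i * φ i := by
  set Lc : Matrix (Fin N) (Fin N) ℂ := L.map (fun x => (x : ℂ)) with hLcdef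
  set D : Matrix (Fin N) (Fin N) ℂ := Matrix.diagonal (fun i => (α i : ℂ)) with hDdef
  set M : Matrix (Fin N) (Fin N) ℂ := Lc + (h : ℂ) • 1 + Complex.I • D with hMdef
  -- the quadratic form of Lc has nonnegative real part
  have hquadL : ∀ v : Fin N → ℂ, 0 ≤ (star v ⬝ᵥ (Lc *ᵥ v)).re := by
    intro v
    have key : (star v ⬝ᵥ (Lc *ᵥ v)).re
        = ((fun i => (v i).re) ⬝ᵥ (L *ᵥ fun i => (v i).re))
          + ((fun i => (v i).im) ⬝ᵥ (L *ᵥ fun i => (v i).im)) := by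
      simp only [dotProduct, mulVec, hLcdef, Matrix.map_apply, Pi.star_apply,
        Complex.re_sum, Finset.mul_sum]
      rw [← Finset.sum_add_distrib]
      refine Finset.sum_congr rfl fun i _ => ?_
      rw [← Finset.sum_add_distrib]
      refine Finset.sum_congr rfl fun j _ => ?_
      simp only [Complex.mul_re, Complex.mul_im, Complex.star_def, Complex.conj_re,
        Complex.conj_im, Complex.ofReal_re, Complex.ofReal_im]
      ring
    have h1 := hLpsd.dotProduct_mulVec_nonneg (fun i => (v i).re)
    have h2 := hLpsd.dotProduct_mulVec_nonneg (fun i => (v i).im)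
    simp only [star_trivial, RCLike.re_to_real] at h1 h2
    rw [key]
    exact add_nonneg h1 h2
  -- real part of the M-quadratic form
  have hMquad : ∀ v : Fin N → ℂ,
      (star v ⬝ᵥ (M *ᵥ v)).re
        = (star v ⬝ᵥ (Lc *ᵥ v)).re + h * ∑ i, Complex.normSq (v i) := by
    intro v
    have expand : star v ⬝ᵥ (M *ᵥ v)
        = star v ⬝ᵥ (Lc *ᵥ v) + ((∑ i, Complex.normSq (v i) * h : ℝ) : ℂ)
          + Complex.I * ((∑ i, α i * Complex.normSq (v i) : ℝ) : ℂ) := by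
      rw [hMdef, add_mulVec, add_mulVec, dotProduct_add, dotProduct_add,
        smul_mulVec, smul_mulVec, one_mulVec]
      congr 1
      · congr 1
        push_cast
        simp only [dotProduct, Pi.smul_apply, smul_eq_mul, Pi.star_apply]
        refine Finset.sum_congr rfl fun i _ => ?_
        rw [Complex.normSq_eq_conj_mul_self]
        simp only [Complex.star_def]
        ring
      · rw [dotProduct_smul, smul_eq_mul]
        congr 1
        push_cast
        simp only [dotProduct, mulVec, hDdef, Matrix.diagonal_apply, Pi.star_apply]
        refine Finset.sum_congr rfl fun i _ => ?_
        rw [Finset.sum_eq_single i (fun b _ hb => by simp [Ne.symm hb]) (by simp)]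
        simp only [if_pos rfl, if_true, Complex.normSq_eq_conj_mul_self,
          Complex.star_def]
        ring
    rw [expand]
    simp only [Complex.add_re, Complex.ofReal_re, Complex.mul_re, Complex.I_re,
      Complex.I_im, Complex.ofReal_im, zero_mul, one_mul, mul_zero, sub_zero, zero_sub]
    rw [← Finset.sum_mul]
    ring
  -- positivity helper
  have hnormsum : ∀ v : Fin N → ℂ, v ≠ 0 → 0 < ∑ i, Complex.normSq (v i) := by
    intro v hv
    obtain ⟨i, hi⟩ := Function.ne_iff.mp hv
    exact Finset.sum_pos' (fun j _ => Complex.normSq_nonneg _)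
      ⟨i, Finset.mem_univ i, Complex.normSq_pos.mpr hi⟩
  -- M is invertible
  have hdet : M.det ≠ 0 := by
    intro hdet0
    obtain ⟨v, hv, hMv⟩ := (Matrix.exists_mulVec_eq_zero_iff).mpr hdet0
    have h0 : (star v ⬝ᵥ (M *ᵥ v)).re = 0 := by rw [hMv]; simp
    rw [hMquad v] at h0
    have := hquadL v
    have := hnormsum v hv
    nlinarith
  have hdetU : IsUnit M.det := isUnit_iff_ne_zero.mpr hdet
  set φc : Fin N → ℂ := fun i => (φ i : ℂ) with hφcdef
  set x : Fin N → ℂ := M⁻¹ *ᵥ φc with hxdef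
  have hMx : M *ᵥ x = φc := by
    rw [hxdef, mulVec_mulVec, Matrix.mul_nonsing_inv _ hdetU, one_mulVec]
  -- symmetry of M
  have hMsymm : Mᵀ = M := by
    rw [hMdef]
    simp only [transpose_add, transpose_smul, transpose_one]
    congr 2
    · rw [hLcdef, ← Matrix.transpose_map, hLsymm.eq]
    · rw [hDdef, diagonal_transpose]
  -- the sums as dot products
  have hS1 : ∑ i, ∑ j, (φ i : ℂ) * (M⁻¹ i j) * (φ j : ℂ) = φc ⬝ᵥ x := by
    rw [hxdef]
    simp only [dotProduct, mulVec, hφcdef, Finset.mul_sum]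
    exact Finset.sum_congr rfl fun i _ => Finset.sum_congr rfl fun j _ => by ring
  have hS2 : ∑ i, ∑ j, (φ i : ℂ) * ((M⁻¹ * M⁻¹) i j) * (φ j : ℂ) = x ⬝ᵥ x := by
    have e1 : ∑ i, ∑ j, (φ i : ℂ) * ((M⁻¹ * M⁻¹) i j) * (φ j : ℂ)
        = φc ⬝ᵥ ((M⁻¹ * M⁻¹) *ᵥ φc) := by
      simp only [dotProduct, mulVec, hφcdef, Finset.mul_sum]
      exact Finset.sum_congr rfl fun i _ => Finset.sum_congr rfl fun j _ => by ring
    rw [e1, ← mulVec_mulVec, ← hxdef, dotProduct_mulVec]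
    congr 1
    rw [hxdef, ← vecMul_transpose, Matrix.transpose_nonsing_inv, hMsymm]
  set n : ℝ := ∑ i, Complex.normSq (x i) with hndef
  set t : ℝ := (star x ⬝ᵥ (Lc *ᵥ x)).re with htdef
  have ht : 0 ≤ t := hquadL x
  have hn : 0 ≤ n := Finset.sum_nonneg fun i _ => Complex.normSq_nonneg _
  -- real part of S1
  have hreS1 : (φc ⬝ᵥ x).re = t + h * n := by
    have e : star x ⬝ᵥ φc = starRingEnd ℂ (φc ⬝ᵥ x) := by
      simp only [dotProduct, map_sum, _root_.map_mul, Pi.star_apply, hφcdef]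
      refine Finset.sum_congr rfl fun i _ => ?_
      simp only [Complex.star_def, Complex.conj_ofReal]
      ring
    have e2 : (φc ⬝ᵥ x).re = (star x ⬝ᵥ (M *ᵥ x)).re := by
      rw [hMx, e, Complex.conj_re]
    rw [e2, hMquad x, ← htdef, ← hndef]
  -- alternate form for Cauchy-Schwarz
  have hreS1' : (φc ⬝ᵥ x).re = ∑ i, φ i * (x i).re := by
    simp only [dotProduct, Complex.re_sum, hφcdef]
    exact Finset.sum_congr rfl fun i _ => Complex.re_ofReal_mul _ _
  set P : ℝ := ∑ i, φ i * φ i with hPdef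
  have hP : 0 ≤ P := Finset.sum_nonneg fun i _ => mul_self_nonneg _
  -- Cauchy-Schwarz
  have hcs : ((φc ⬝ᵥ x).re) ^ 2 ≤ n * P := by
    rw [hreS1']
    calc (∑ i, φ i * (x i).re) ^ 2
        ≤ (∑ i, φ i ^ 2) * ∑ i, (x i).re ^ 2 :=
          Finset.sum_mul_sq_le_sq_mul_sq _ _ _
      _ ≤ P * n := by
          apply mul_le_mul
          · exact le_of_eq (by rw [hPdef]; exact Finset.sum_congr rfl fun i _ => by ring)
          · rw [hndef]
            refine Finset.sum_le_sum fun i _ => ?_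
            rw [Complex.normSq_apply]
            nlinarith [sq_nonneg ((x i).im)]
          · exact Finset.sum_nonneg fun i _ => sq_nonneg _
          · exact hP
      _ = n * P := mul_comm _ _
  -- bound Re(x ⬝ᵥ x) by n
  have hxx : (x ⬝ᵥ x).re ≤ n := by
    rw [hndef]
    simp only [dotProduct, Complex.re_sum]
    refine Finset.sum_le_sum fun i _ => ?_
    rw [Complex.mul_re, Complex.normSq_apply]
    nlinarith [sq_nonneg ((x i).im)]
  constructor
  · -- first inequality
    rw [hS1, hS2]
    have e2 : ((h : ℂ) ^ 2 * (x ⬝ᵥ x)).re = h ^ 2 * (x ⬝ᵥ x).re := by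
      rw [← Complex.ofReal_pow, Complex.re_ofReal_mul]
    have e1 : ((h : ℂ) * (φc ⬝ᵥ x)).re = h * (φc ⬝ᵥ x).re := Complex.re_ofReal_mul _ _
    rw [e1, e2, hreS1]
    nlinarith
  · -- second inequality
    rw [hS1]
    have e1 : ((h : ℂ) * (φc ⬝ᵥ x)).re = h * (φc ⬝ᵥ x).re := Complex.re_ofReal_mul _ _
    rw [e1]
    rw [hreS1] at hcs ⊢
    rcases eq_or_lt_of_le hn with hn0 | hn0
    · have hn' : n = 0 := hn0.symm
      rw [hn'] at hcs ⊢
      have ht0 : t = 0 := by nlinarith [ht, hcs]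
      rw [ht0]
      nlinarith [hP]
    · nlinarith [hcs, hn0, mul_nonneg ht (add_nonneg ht (mul_nonneg hh.le hn))]
end

section
/- The following chain of inequalities holds: 1 ≥ Re( (h/N) Σ_{i,j=1}^N (L + hI + iα)^{-1}_{ij} ) ≥ Re( (h²/N) Σ_{i,j=1}^N (L + hI + iα)^{-2}_{ij} ). -/
open Matrix BigOperators

section Aux
variable {N : ℕ}

/-- Quadratic form lower bound for `M = L + h•1 + i•diag α`. -/
lemma re_quad_aux (L : Matrix (Fin N) (Fin N) ℝ) (hLpsd : L.PosSemidef)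
    (h : ℝ) (α : Fin N → ℝ) (x : Fin N → ℂ) :
    h * ∑ i, Complex.normSq (x i) ≤
      (star x ⬝ᵥ ((L.map (fun r : ℝ => (r : ℂ)) + (h : ℂ) • 1
        + Complex.I • Matrix.diagonal (fun i => (α i : ℂ))) *ᵥ x)).re := by
  have hsplit : star x ⬝ᵥ ((L.map (fun r : ℝ => (r : ℂ)) + (h : ℂ) • 1
        + Complex.I • Matrix.diagonal (fun i => (α i : ℂ))) *ᵥ x)
      = star x ⬝ᵥ (L.map (fun r : ℝ => (r : ℂ)) *ᵥ x)
        + (h : ℂ) * (star x ⬝ᵥ x)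
        + Complex.I * (star x ⬝ᵥ (Matrix.diagonal (fun i => (α i : ℂ)) *ᵥ x)) := by
    simp [add_mulVec, smul_mulVec, dotProduct_add, dotProduct_smul, one_mulVec,
      smul_eq_mul]
  rw [hsplit]
  have h1 : (star x ⬝ᵥ (L.map (fun r : ℝ => (r : ℂ)) *ᵥ x)).re
      = (fun i => (x i).re) ⬝ᵥ (L *ᵥ fun i => (x i).re)
        + (fun i => (x i).im) ⬝ᵥ (L *ᵥ fun i => (x i).im) := by
    simp only [dotProduct, mulVec, Pi.star_apply, Complex.re_sum, Finset.mul_sum,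
      map_apply]
    rw [← Finset.sum_add_distrib]
    refine Finset.sum_congr rfl fun i _ => ?_
    rw [← Finset.sum_add_distrib]
    refine Finset.sum_congr rfl fun j _ => ?_
    simp [Complex.mul_re, Complex.mul_im]
  have h2 : ((h : ℂ) * (star x ⬝ᵥ x)).re = h * ∑ i, Complex.normSq (x i) := by
    simp only [dotProduct, Pi.star_apply, Complex.re_ofReal_mul, Complex.re_sum]
    congr 1
    refine Finset.sum_congr rfl fun i _ => ?_
    simp [Complex.mul_re, Complex.normSq_apply]
  have h3 : (Complex.I * (star x ⬝ᵥ (Matrix.diagonal (fun i => (α i : ℂ)) *ᵥ x))).re = 0 := by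
    rw [Complex.I_mul_re]
    simp only [dotProduct, Pi.star_apply, mulVec_diagonal, Complex.im_sum]
    refine neg_eq_zero.mpr (Finset.sum_eq_zero fun i _ => ?_)
    simp [Complex.mul_im]
    ring
  rw [Complex.add_re, Complex.add_re, h1, h2, h3]
  have hp : 0 ≤ (fun i => (x i).re) ⬝ᵥ (L *ᵥ fun i => (x i).re) := by
    simpa using hLpsd.dotProduct_mulVec_nonneg (fun i => (x i).re)
  have hq : 0 ≤ (fun i => (x i).im) ⬝ᵥ (L *ᵥ fun i => (x i).im) := by
    simpa using hLpsd.dotProduct_mulVec_nonneg (fun i => (x i).im)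
  linarith

end Aux

/-- `1 ≥ Re((h/N) Σᵢⱼ (L+hI+iα)⁻¹ᵢⱼ) ≥ Re((h²/N) Σᵢⱼ (L+hI+iα)⁻²ᵢⱼ)`. -/
theorem averaged_inequalities (N : ℕ) (hN : 0 < N)
    (L : Matrix (Fin N) (Fin N) ℝ) (hLsymm : L.IsSymm) (hLpsd : L.PosSemidef)
    (h : ℝ) (hh : 0 < h) (α : Fin N → ℝ) :
    (((h : ℂ) / (N : ℂ)) * ∑ i, ∑ j,
        (L.map (fun x => (x : ℂ)) + (h : ℂ) • 1
          + Complex.I • Matrix.diagonal (fun i => (α i : ℂ)))⁻¹ i j).re ≤ 1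
    ∧ (((h : ℂ) ^ 2 / (N : ℂ)) * ∑ i, ∑ j,
        (((L.map (fun x => (x : ℂ)) + (h : ℂ) • 1
            + Complex.I • Matrix.diagonal (fun i => (α i : ℂ)))⁻¹
          * (L.map (fun x => (x : ℂ)) + (h : ℂ) • 1
            + Complex.I • Matrix.diagonal (fun i => (α i : ℂ)))⁻¹) i j)).re
      ≤ (((h : ℂ) / (N : ℂ)) * ∑ i, ∑ j,
        (L.map (fun x => (x : ℂ)) + (h : ℂ) • 1
          + Complex.I • Matrix.diagonal (fun i => (α i : ℂ)))⁻¹ i j).re := by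
  set M : Matrix (Fin N) (Fin N) ℂ := L.map (fun x => (x : ℂ)) + (h : ℂ) • 1
    + Complex.I • Matrix.diagonal (fun i => (α i : ℂ)) with hM
  -- invertibility
  have hdet : IsUnit M.det := by
    rw [isUnit_iff_ne_zero]
    intro hd
    obtain ⟨v, hv0, hv⟩ := (Matrix.exists_mulVec_eq_zero_iff).mpr hd
    have hq := re_quad_aux L hLpsd h α v
    rw [← hM, hv] at hq
    simp only [dotProduct_zero, Complex.zero_re] at hq
    obtain ⟨i, hi⟩ := Function.ne_iff.mp hv0
    have hpos : 0 < ∑ i, Complex.normSq (v i) :=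
      Finset.sum_pos' (fun j _ => Complex.normSq_nonneg _)
        ⟨i, Finset.mem_univ i, Complex.normSq_pos.mpr hi⟩
    nlinarith
  -- symmetry of M and of M⁻¹
  have hMsymm : Mᵀ = M := by
    rw [hM]
    simp only [transpose_add, transpose_smul, diagonal_transpose, transpose_one]
    rw [← Matrix.transpose_map, hLsymm]
  have hinvsymm : (M⁻¹)ᵀ = M⁻¹ := by
    rw [Matrix.transpose_nonsing_inv, hMsymm]
  set u : Fin N → ℂ := fun _ => (1 : ℂ) with hu
  set w : Fin N → ℂ := M⁻¹ *ᵥ u with hw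
  have hMw : M *ᵥ w = u := by
    rw [hw, mulVec_mulVec, Matrix.mul_nonsing_inv _ hdet, one_mulVec]
  have hwk : ∀ k, w k = ∑ j, M⁻¹ k j := by
    intro k; simp [hw, mulVec, dotProduct, u]
  have hS1 : ∑ i, ∑ j, M⁻¹ i j = ∑ i, w i := by
    simp [hwk]
  have hS2 : ∑ i, ∑ j, (M⁻¹ * M⁻¹) i j = ∑ k, (w k) ^ 2 := by
    calc ∑ i, ∑ j, (M⁻¹ * M⁻¹) i j = ∑ i, ∑ j, ∑ k, M⁻¹ i k * M⁻¹ k j := by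
          simp [Matrix.mul_apply]
      _ = ∑ i, ∑ k, M⁻¹ i k * ∑ j, M⁻¹ k j := by
          refine Finset.sum_congr rfl fun i _ => ?_
          rw [Finset.sum_comm]
          exact Finset.sum_congr rfl fun k _ => (Finset.mul_sum _ _ _).symm
      _ = ∑ k, (∑ i, M⁻¹ i k) * (∑ j, M⁻¹ k j) := by
          rw [Finset.sum_comm]
          exact Finset.sum_congr rfl fun k _ => (Finset.sum_mul _ _ _).symm
      _ = ∑ k, (w k) ^ 2 := by
          refine Finset.sum_congr rfl fun k _ => ?_
          have : ∑ i, M⁻¹ i k = ∑ i, M⁻¹ k i := by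
            refine Finset.sum_congr rfl fun i _ => ?_
            conv_lhs => rw [← hinvsymm]
            rfl
          rw [this, ← hwk, sq]
  -- the real quantities
  set a : ℝ := (∑ i, w i).re with ha
  set s : ℝ := ∑ i, Complex.normSq (w i) with hs
  have hkey : h * s ≤ a := by
    have hq := re_quad_aux L hLpsd h α w
    rw [← hM, hMw] at hq
    have : (star w ⬝ᵥ u).re = a := by
      simp [dotProduct, u, ha, Complex.re_sum]
    linarith [hq, this.ge, this.le]
  have hs0 : 0 ≤ s := Finset.sum_nonneg fun i _ => Complex.normSq_nonneg _
  have ha0 : 0 ≤ a := le_trans (by positivity) hkey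
  have hCS : a ^ 2 ≤ (N : ℝ) * s := by
    have h1 : a = ∑ i, (w i).re := by rw [ha, Complex.re_sum]
    have h2 : (∑ i, (w i).re) ^ 2 ≤ (Finset.univ.card : ℝ) * ∑ i, ((w i).re) ^ 2 :=
      sq_sum_le_card_mul_sum_sq
    have h3 : ∑ i, ((w i).re) ^ 2 ≤ s := by
      refine Finset.sum_le_sum fun i _ => ?_
      rw [Complex.normSq_apply]
      nlinarith [sq_nonneg ((w i).im)]
    calc a ^ 2 = (∑ i, (w i).re) ^ 2 := by rw [h1]
      _ ≤ (Finset.univ.card : ℝ) * ∑ i, ((w i).re) ^ 2 := h2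
      _ = (N : ℝ) * ∑ i, ((w i).re) ^ 2 := by simp
      _ ≤ (N : ℝ) * s := by
          have hN' : (0:ℝ) ≤ N := Nat.cast_nonneg N
          nlinarith
  have hN' : (0:ℝ) < N := by exact_mod_cast hN
  have hhaN : h * a ≤ N := by
    rcases eq_or_lt_of_le ha0 with h0 | h0
    · rw [← h0]; simpa using hN'.le
    · nlinarith
  have hcast : (h : ℂ) / (N : ℂ) = ((h / N : ℝ) : ℂ) := by push_cast; ring
  have hcast2 : (h : ℂ) ^ 2 / (N : ℂ) = ((h ^ 2 / N : ℝ) : ℂ) := by push_cast; ring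
  constructor
  · rw [hS1, hcast, Complex.re_ofReal_mul, ← ha]
    rw [div_mul_eq_mul_div, div_le_one hN']
    linarith [mul_comm h a]
  · rw [hS1, hS2, hcast, hcast2, Complex.re_ofReal_mul, Complex.re_ofReal_mul, ← ha]
    have hres2 : (∑ k, (w k) ^ 2).re ≤ s := by
      rw [Complex.re_sum, hs]
      refine Finset.sum_le_sum fun i _ => ?_
      simp [Complex.normSq_apply, sq, Complex.mul_re]
      nlinarith [sq_nonneg ((w i).im)]
    have hleft : h ^ 2 * (∑ k, (w k) ^ 2).re ≤ h * a := by
      nlinarith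
    rw [div_mul_eq_mul_div, div_mul_eq_mul_div, div_le_div_iff₀ hN' hN']
    nlinarith
end

section
/- For every real vector φ ∈ ℝ^N, the complex number φᵗ (L + hI − iα)^{-1} (L + hI + iα)^{-1} φ is a nonnegative real number and satisfies φᵗ (L + hI − iα)^{-1} (L + hI + iα)^{-1} φ ≤ (1/h) Re( φᵗ (L + hI + iα)^{-1} φ ). -/
open Matrix BigOperators

private lemma dot_expand {N : ℕ} (Lc D : Matrix (Fin N) (Fin N) ℂ) (a c : ℂ)
    (x : Fin N → ℂ) :
    star x ⬝ᵥ (Lc + a • 1 + c • D) *ᵥ x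
      = star x ⬝ᵥ Lc *ᵥ x + a * (star x ⬝ᵥ x) + c * (star x ⬝ᵥ D *ᵥ x) := by
  simp [add_mulVec, smul_mulVec, one_mulVec, dotProduct_add, dotProduct_smul,
    smul_eq_mul]

private lemma reL_nonneg {N : ℕ} {L : Matrix (Fin N) (Fin N) ℝ} (hL : L.PosSemidef)
    (x : Fin N → ℂ) :
    0 ≤ (star x ⬝ᵥ (L.map (fun r : ℝ => (r : ℂ))) *ᵥ x).re := by
  have hre : (star x ⬝ᵥ (L.map (fun r : ℝ => (r : ℂ))) *ᵥ x).re
      = star (fun i => (x i).re) ⬝ᵥ L *ᵥ (fun i => (x i).re)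
        + star (fun i => (x i).im) ⬝ᵥ L *ᵥ (fun i => (x i).im) := by
    simp only [dotProduct, mulVec, Matrix.map_apply, Pi.star_apply, star_trivial,
      Finset.mul_sum, Complex.re_sum]
    rw [← Finset.sum_add_distrib]
    refine Finset.sum_congr rfl fun i _ => ?_
    rw [← Finset.sum_add_distrib]
    refine Finset.sum_congr rfl fun j _ => ?_
    simp only [Complex.mul_re, Complex.mul_im, Complex.ofReal_re, Complex.ofReal_im, Complex.star_def, Complex.conj_re, Complex.conj_im]
    ring
  rw [hre]
  exact add_nonneg (hL.dotProduct_mulVec_nonneg _) (hL.dotProduct_mulVec_nonneg _)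

private lemma imD_zero {N : ℕ} (α : Fin N → ℝ) (x : Fin N → ℂ) :
    (star x ⬝ᵥ (Matrix.diagonal fun i => (α i : ℂ)) *ᵥ x).im = 0 := by
  simp only [dotProduct, mulVec_diagonal, Pi.star_apply, Complex.im_sum]
  refine Finset.sum_eq_zero fun i _ => ?_
  simp only [Complex.mul_im, Complex.mul_re, Complex.ofReal_re, Complex.ofReal_im, Complex.star_def, Complex.conj_re, Complex.conj_im]
  ring

private lemma star_dot_self {N : ℕ} (x : Fin N → ℂ) :
    star x ⬝ᵥ x = ((∑ i, Complex.normSq (x i) : ℝ) : ℂ) := by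
  rw [dotProduct, Complex.ofReal_sum]
  refine Finset.sum_congr rfl fun i _ => ?_
  rw [Pi.star_apply, Complex.star_def, mul_comm, Complex.mul_conj]

/-- For every real vector `φ`, the complex number `φᵗ (L+hI−iα)⁻¹ (L+hI+iα)⁻¹ φ` is a
nonnegative real and is at most `(1/h)·Re(φᵗ (L+hI+iα)⁻¹ φ)`. -/
theorem sandwich_quadratic_form (N : ℕ) (hN : 0 < N)
    (L : Matrix (Fin N) (Fin N) ℝ) (hLsymm : L.IsSymm) (hLpsd : L.PosSemidef)
    (h : ℝ) (hh : 0 < h) (α : Fin N → ℝ) (φ : Fin N → ℝ) :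
    (∑ i, ∑ j, (φ i : ℂ) *
        (((L.map (fun x => (x : ℂ)) + (h : ℂ) • 1
            - Complex.I • Matrix.diagonal (fun i => (α i : ℂ)))⁻¹
          * (L.map (fun x => (x : ℂ)) + (h : ℂ) • 1
            + Complex.I • Matrix.diagonal (fun i => (α i : ℂ)))⁻¹) i j) * (φ j : ℂ)).im = 0
    ∧ 0 ≤ (∑ i, ∑ j, (φ i : ℂ) *
        (((L.map (fun x => (x : ℂ)) + (h : ℂ) • 1
            - Complex.I • Matrix.diagonal (fun i => (α i : ℂ)))⁻¹
          * (L.map (fun x => (x : ℂ)) + (h : ℂ) • 1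
            + Complex.I • Matrix.diagonal (fun i => (α i : ℂ)))⁻¹) i j) * (φ j : ℂ)).re
    ∧ (∑ i, ∑ j, (φ i : ℂ) *
        (((L.map (fun x => (x : ℂ)) + (h : ℂ) • 1
            - Complex.I • Matrix.diagonal (fun i => (α i : ℂ)))⁻¹
          * (L.map (fun x => (x : ℂ)) + (h : ℂ) • 1
            + Complex.I • Matrix.diagonal (fun i => (α i : ℂ)))⁻¹) i j) * (φ j : ℂ)).re
      ≤ (1 / h) * (∑ i, ∑ j, (φ i : ℂ) *
        ((L.map (fun x => (x : ℂ)) + (h : ℂ) • 1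
          + Complex.I • Matrix.diagonal (fun i => (α i : ℂ)))⁻¹ i j) * (φ j : ℂ)).re := by
  classical
  set Lc : Matrix (Fin N) (Fin N) ℂ := L.map (fun x => (x : ℂ)) with hLcdef
  set D : Matrix (Fin N) (Fin N) ℂ := Matrix.diagonal (fun i => (α i : ℂ)) with hDdef
  set A : Matrix (Fin N) (Fin N) ℂ := Lc + (h : ℂ) • 1 + Complex.I • D with hAdef
  set B : Matrix (Fin N) (Fin N) ℂ := Lc + (h : ℂ) • 1 - Complex.I • D with hBdef
  set φc : Fin N → ℂ := fun i => (φ i : ℂ) with hφcdef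
  have hstarφ : star φc = φc := by
    funext i
    simp [hφcdef]
  -- rewrite the sums as dot products
  have hsum : ∀ M : Matrix (Fin N) (Fin N) ℂ,
      (∑ i, ∑ j, (φ i : ℂ) * M i j * (φ j : ℂ)) = star φc ⬝ᵥ M *ᵥ φc := by
    intro M
    rw [hstarφ]
    simp [dotProduct, mulVec, Finset.mul_sum, mul_assoc, hφcdef]
  -- B is the conjugate transpose of A
  have hAB : Aᴴ = B := by
    ext i j
    rcases eq_or_ne i j with rfl | hij
    · simp [hAdef, hBdef, hLcdef, hDdef, conjTranspose_apply, Matrix.add_apply,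
        Matrix.sub_apply, Matrix.smul_apply, Matrix.one_apply, Matrix.diagonal_apply,
        Matrix.map_apply, smul_eq_mul, Complex.conj_ofReal, Complex.conj_I, sub_eq_add_neg]
    · simp [hAdef, hBdef, hLcdef, hDdef, conjTranspose_apply, Matrix.add_apply,
        Matrix.sub_apply, Matrix.smul_apply, Matrix.one_apply, Matrix.diagonal_apply,
        Matrix.map_apply, smul_eq_mul, hij, Ne.symm hij, Complex.conj_ofReal,
        hLsymm.apply i j]
  -- A is invertible
  have hAdet : IsUnit A.det := by
    rw [isUnit_iff_ne_zero]
    intro hdet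
    obtain ⟨v, hv0, hAv⟩ := (Matrix.exists_mulVec_eq_zero_iff).2 hdet
    have h1 : star v ⬝ᵥ A *ᵥ v = 0 := by rw [hAv, dotProduct_zero]
    rw [hAdef, dot_expand, star_dot_self] at h1
    have h2 := congrArg Complex.re h1
    simp only [Complex.add_re, Complex.mul_re, Complex.ofReal_re, Complex.ofReal_im,
      Complex.I_re, Complex.I_im, Complex.zero_re, zero_mul, one_mul, mul_zero,
      sub_zero, zero_sub] at h2
    rw [imD_zero] at h2
    have hLre : 0 ≤ (star v ⬝ᵥ Lc *ᵥ v).re := reL_nonneg hLpsd v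
    have hvpos : 0 < ∑ i, Complex.normSq (v i) := by
      obtain ⟨i, hi⟩ := Function.ne_iff.1 hv0
      refine Finset.sum_pos' (fun j _ => Complex.normSq_nonneg _) ⟨i, Finset.mem_univ i, ?_⟩
      exact Complex.normSq_pos.2 hi
    nlinarith
  set ψ : Fin N → ℂ := A⁻¹ *ᵥ φc with hψdef
  have hφψ : A *ᵥ ψ = φc := by
    rw [hψdef, Matrix.mulVec_mulVec, Matrix.mul_nonsing_inv _ hAdet, Matrix.one_mulVec]
  -- the first quadratic form is ⟨ψ, ψ⟩
  have key1 : star φc ⬝ᵥ (B⁻¹ * A⁻¹) *ᵥ φc = star ψ ⬝ᵥ ψ := by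
    rw [← hAB, ← Matrix.conjTranspose_nonsing_inv, ← Matrix.mulVec_mulVec,
      Matrix.dotProduct_mulVec, ← Matrix.star_mulVec, ← hψdef]
  -- the second quadratic form is ⟨ψ, B ψ⟩
  have key2 : star φc ⬝ᵥ A⁻¹ *ᵥ φc = star ψ ⬝ᵥ B *ᵥ ψ := by
    rw [← hψdef, ← hφψ, Matrix.star_mulVec, hAB, ← Matrix.dotProduct_mulVec]
  have hQ : star ψ ⬝ᵥ ψ = ((∑ i, Complex.normSq (ψ i) : ℝ) : ℂ) := star_dot_self ψ
  have hQre : (star ψ ⬝ᵥ ψ).re = ∑ i, Complex.normSq (ψ i) := by rw [hQ, Complex.ofReal_re]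
  have hQnonneg : 0 ≤ ∑ i, Complex.normSq (ψ i) :=
    Finset.sum_nonneg fun i _ => Complex.normSq_nonneg _
  have hBexp : B = Lc + (h : ℂ) • 1 + (-Complex.I) • D := by
    rw [hBdef, sub_eq_add_neg, neg_smul]
  have hRre : h * ∑ i, Complex.normSq (ψ i) ≤ (star ψ ⬝ᵥ B *ᵥ ψ).re := by
    rw [hBexp, dot_expand, hQ]
    have hLre : 0 ≤ (star ψ ⬝ᵥ Lc *ᵥ ψ).re := reL_nonneg hLpsd ψ
    simp only [Complex.add_re, Complex.mul_re, Complex.ofReal_re, Complex.ofReal_im,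
      Complex.neg_re, Complex.neg_im, Complex.I_re, Complex.I_im, neg_zero, zero_mul,
      one_mul, mul_zero, sub_zero, zero_sub, neg_neg, neg_mul]
    rw [imD_zero]
    linarith
  rw [hsum, hsum, key1, key2, hQ]
  refine ⟨by rw [Complex.ofReal_im], by rw [Complex.ofReal_re]; exact hQnonneg, ?_⟩
  rw [Complex.ofReal_re]
  calc (∑ i, Complex.normSq (ψ i))
      = (1 / h) * (h * ∑ i, Complex.normSq (ψ i)) := by field_simp
    _ ≤ (1 / h) * (star ψ ⬝ᵥ B *ᵥ ψ).re := by
        apply mul_le_mul_of_nonneg_left hRre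
        positivity
end

section
/- One has 0 ≤ (1/N) Σ_{i,k,j=1}^N α_i (L + hI − iα)^{-1}_{ik} (L + hI + iα)^{-1}_{kj} α_j ≤ Re( (1/(Nh)) Σ_{i,j=1}^N α_i (L + hI + iα)^{-1}_{ij} α_j ); in particular the left-hand sum is a nonnegative real number. -/
open Matrix BigOperators

private lemma key_real {N : ℕ} (L : Matrix (Fin N) (Fin N) ℝ) (hL : L.PosSemidef)
    (y : Fin N → ℝ) : 0 ≤ ∑ i, ∑ j, L i j * y i * y j := by
  have := hL.dotProduct_mulVec_nonneg y
  simpa [dotProduct, mulVec, Finset.mul_sum, mul_comm, mul_assoc, mul_left_comm] using this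

private lemma key_cx {N : ℕ} (L : Matrix (Fin N) (Fin N) ℝ) (hL : L.PosSemidef)
    (x : Fin N → ℂ) : 0 ≤ (star x ⬝ᵥ ((L.map (fun r => (r : ℂ))) *ᵥ x)).re := by
  have e : (star x ⬝ᵥ ((L.map (fun r => (r : ℂ))) *ᵥ x)).re
      = (∑ i, ∑ j, L i j * (x i).re * (x j).re)
        + (∑ i, ∑ j, L i j * (x i).im * (x j).im) := by
    simp only [dotProduct, mulVec, dotProduct, Pi.star_apply, Matrix.map_apply,
      Finset.mul_sum]
    rw [Complex.re_sum, ← Finset.sum_add_distrib]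
    refine Finset.sum_congr rfl fun i _ => ?_
    rw [Complex.re_sum, ← Finset.sum_add_distrib]
    refine Finset.sum_congr rfl fun j _ => ?_
    simp [Complex.mul_re, Complex.mul_im]
    ring
  rw [e]
  exact add_nonneg (key_real L hL _) (key_real L hL _)

private lemma expand_dot {N : ℕ} (L : Matrix (Fin N) (Fin N) ℝ) (h : ℝ) (α : Fin N → ℝ)
    (v w : Fin N → ℂ) :
    star v ⬝ᵥ ((L.map (fun r => (r : ℂ)) + (h : ℂ) • 1
        + Complex.I • Matrix.diagonal (fun i => (α i : ℂ))) *ᵥ w)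
    = star v ⬝ᵥ ((L.map (fun r => (r : ℂ))) *ᵥ w) + (h : ℂ) * (star v ⬝ᵥ w)
      + Complex.I * (star v ⬝ᵥ ((Matrix.diagonal (fun i => (α i : ℂ))) *ᵥ w)) := by
  rw [Matrix.add_mulVec, Matrix.add_mulVec, dotProduct_add, dotProduct_add,
    Matrix.smul_mulVec, Matrix.smul_mulVec, Matrix.one_mulVec,
    dotProduct_smul, dotProduct_smul, smul_eq_mul, smul_eq_mul]

private lemma dotD {N : ℕ} (α : Fin N → ℝ) (v : Fin N → ℂ) :
    star v ⬝ᵥ ((Matrix.diagonal (fun i => (α i : ℂ))) *ᵥ v)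
      = ((∑ i, α i * Complex.normSq (v i) : ℝ) : ℂ) := by
  push_cast
  simp only [dotProduct, Matrix.mulVec_diagonal, Pi.star_apply]
  refine Finset.sum_congr rfl fun i _ => ?_
  rw [Complex.normSq_eq_conj_mul_self]
  simp only [Complex.star_def]
  ring

private lemma dot_self {N : ℕ} (v : Fin N → ℂ) :
    star v ⬝ᵥ v = ((∑ i, Complex.normSq (v i) : ℝ) : ℂ) := by
  push_cast
  simp only [dotProduct, Pi.star_apply]
  refine Finset.sum_congr rfl fun i _ => ?_
  rw [Complex.normSq_eq_conj_mul_self]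
  simp only [Complex.star_def]

/-- `0 ≤ (1/N) Σᵢₖⱼ αᵢ (L+hI−iα)⁻¹ᵢₖ (L+hI+iα)⁻¹ₖⱼ αⱼ
      ≤ Re((1/(Nh)) Σᵢⱼ αᵢ (L+hI+iα)⁻¹ᵢⱼ αⱼ)`,
and in particular the left-hand sum is a nonnegative real number. -/
theorem alpha_triple_sum_inequality (N : ℕ) (hN : 0 < N)
    (L : Matrix (Fin N) (Fin N) ℝ) (hLsymm : L.IsSymm) (hLpsd : L.PosSemidef)
    (h : ℝ) (hh : 0 < h) (α : Fin N → ℝ) :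
    ((1 / (N : ℂ)) * ∑ i, ∑ k, ∑ j, (α i : ℂ) *
        ((L.map (fun x => (x : ℂ)) + (h : ℂ) • 1
            - Complex.I • Matrix.diagonal (fun i => (α i : ℂ)))⁻¹ i k) *
        ((L.map (fun x => (x : ℂ)) + (h : ℂ) • 1
            + Complex.I • Matrix.diagonal (fun i => (α i : ℂ)))⁻¹ k j) * (α j : ℂ)).im = 0
    ∧ 0 ≤ ((1 / (N : ℂ)) * ∑ i, ∑ k, ∑ j, (α i : ℂ) *
        ((L.map (fun x => (x : ℂ)) + (h : ℂ) • 1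
            - Complex.I • Matrix.diagonal (fun i => (α i : ℂ)))⁻¹ i k) *
        ((L.map (fun x => (x : ℂ)) + (h : ℂ) • 1
            + Complex.I • Matrix.diagonal (fun i => (α i : ℂ)))⁻¹ k j) * (α j : ℂ)).re
    ∧ ((1 / (N : ℂ)) * ∑ i, ∑ k, ∑ j, (α i : ℂ) *
        ((L.map (fun x => (x : ℂ)) + (h : ℂ) • 1
            - Complex.I • Matrix.diagonal (fun i => (α i : ℂ)))⁻¹ i k) *
        ((L.map (fun x => (x : ℂ)) + (h : ℂ) • 1
            + Complex.I • Matrix.diagonal (fun i => (α i : ℂ)))⁻¹ k j) * (α j : ℂ)).re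
      ≤ ((1 / ((N : ℂ) * (h : ℂ))) * ∑ i, ∑ j, (α i : ℂ) *
        ((L.map (fun x => (x : ℂ)) + (h : ℂ) • 1
            + Complex.I • Matrix.diagonal (fun i => (α i : ℂ)))⁻¹ i j) * (α j : ℂ)).re := by
  set Q : Matrix (Fin N) (Fin N) ℂ :=
    L.map (fun x => (x : ℂ)) + (h : ℂ) • 1
      - Complex.I • Matrix.diagonal (fun i => (α i : ℂ)) with hQdef
  set P : Matrix (Fin N) (Fin N) ℂ :=
    L.map (fun x => (x : ℂ)) + (h : ℂ) • 1
      + Complex.I • Matrix.diagonal (fun i => (α i : ℂ)) with hPdef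
  -- conjugate transpose relation
  have hLcH : (L.map (fun x => (x : ℂ)))ᴴ = L.map (fun x => (x : ℂ)) := by
    ext i j
    simp [Matrix.conjTranspose_apply, Matrix.map_apply, hLsymm.apply i j]
  have hPH : Pᴴ = Q := by
    rw [hPdef, hQdef, Matrix.conjTranspose_add, Matrix.conjTranspose_add,
      Matrix.conjTranspose_smul, Matrix.conjTranspose_smul, Matrix.conjTranspose_one,
      Matrix.diagonal_conjTranspose, hLcH]
    have h2 : star (fun i => (α i : ℂ)) = fun i => (α i : ℂ) := by
      funext i; simp [Complex.star_def, Complex.conj_ofReal]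
    rw [h2]
    simp [Complex.star_def, Complex.conj_ofReal, Complex.conj_I, sub_eq_add_neg, neg_smul]
  -- invertibility of P
  have hker : ∀ v : Fin N → ℂ, P *ᵥ v = 0 → v = 0 := by
    intro v hv
    by_contra hv0
    obtain ⟨i0, hi0⟩ : ∃ i, v i ≠ 0 := by
      by_contra hc; push_neg at hc; exact hv0 (funext hc)
    have hs : 0 < ∑ i, Complex.normSq (v i) :=
      Finset.sum_pos' (fun i _ => Complex.normSq_nonneg _)
        ⟨i0, Finset.mem_univ _, Complex.normSq_pos.2 hi0⟩
    have h0 : (star v ⬝ᵥ (P *ᵥ v)).re = 0 := by rw [hv]; simp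
    have h1 := expand_dot L h α v v
    rw [← hPdef] at h1
    rw [h1, dotD, dot_self] at h0
    have h2 := key_cx L hLpsd v
    simp only [Complex.add_re, Complex.mul_re, Complex.ofReal_re, Complex.ofReal_im,
      Complex.I_re, Complex.I_im, mul_zero, zero_mul, sub_zero, zero_sub, one_mul,
      neg_zero, add_zero] at h0
    nlinarith [mul_pos hh hs]
  have hPu : IsUnit P := by
    rw [← Matrix.mulVec_injective_iff_isUnit]
    intro v w hvw
    have := hker (v - w) (by rw [Matrix.mulVec_sub, hvw, sub_self])
    exact sub_eq_zero.mp this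
  have hPdet : IsUnit P.det := (Matrix.isUnit_iff_isUnit_det P).mp hPu
  have hQinv : Q⁻¹ = (P⁻¹)ᴴ := by
    rw [← hPH, ← Matrix.conjTranspose_nonsing_inv]
  -- the vector x
  set x : Fin N → ℂ := P⁻¹ *ᵥ (fun i => (α i : ℂ)) with hx
  have hxk : ∀ k, x k = ∑ j, P⁻¹ k j * (α j : ℂ) := fun k => rfl
  have claim1 : ∀ k, (∑ i, (α i : ℂ) * Q⁻¹ i k) = (starRingEnd ℂ) (x k) := by
    intro k
    rw [hxk k, map_sum]
    refine Finset.sum_congr rfl fun i _ => ?_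
    rw [hQinv]
    simp only [Matrix.conjTranspose_apply, Complex.star_def, _root_.map_mul, Complex.conj_ofReal]
    ring
  -- the triple sum
  have hS : (∑ i, ∑ k, ∑ j, (α i : ℂ) * (Q⁻¹ i k) * (P⁻¹ k j) * (α j : ℂ))
      = (((∑ k, Complex.normSq (x k)) : ℝ) : ℂ) := by
    rw [Finset.sum_comm]
    push_cast
    refine Finset.sum_congr rfl fun k _ => ?_
    rw [Complex.normSq_eq_conj_mul_self, ← claim1 k, Finset.sum_mul]
    refine Finset.sum_congr rfl fun i _ => ?_
    rw [hxk k, Finset.mul_sum]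
    refine Finset.sum_congr rfl fun j _ => ?_
    ring
  have hs0 : 0 ≤ ∑ k, Complex.normSq (x k) :=
    Finset.sum_nonneg fun k _ => Complex.normSq_nonneg _
  -- the double sum T
  have hPx : P *ᵥ x = (fun i => (α i : ℂ)) := by
    rw [hx, Matrix.mulVec_mulVec, Matrix.mul_nonsing_inv _ hPdet, Matrix.one_mulVec]
  have hconjT : (starRingEnd ℂ) (∑ i, ∑ j, (α i : ℂ) * (P⁻¹ i j) * (α j : ℂ))
      = star x ⬝ᵥ (P *ᵥ x) := by
    rw [map_sum]
    have e1 : ∀ i, (starRingEnd ℂ) (∑ j, (α i : ℂ) * (P⁻¹ i j) * (α j : ℂ))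
        = (∑ j, (α j : ℂ) * Q⁻¹ j i) * (α i : ℂ) := by
      intro i
      rw [_root_.map_sum, Finset.sum_mul]
      refine Finset.sum_congr rfl fun j _ => ?_
      rw [hQinv]
      simp only [Matrix.conjTranspose_apply, Complex.star_def, _root_.map_mul,
        Complex.conj_ofReal]
      ring
    calc (∑ i, (starRingEnd ℂ) (∑ j, (α i : ℂ) * (P⁻¹ i j) * (α j : ℂ)))
        = ∑ i, ((starRingEnd ℂ) (x i)) * (α i : ℂ) := by
          refine Finset.sum_congr rfl fun i _ => ?_
          rw [e1 i, claim1 i]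
      _ = star x ⬝ᵥ (P *ᵥ x) := by
          rw [hPx]
          simp [dotProduct, Complex.star_def]
  have hTre : (∑ i, ∑ j, (α i : ℂ) * (P⁻¹ i j) * (α j : ℂ)).re
      = (star x ⬝ᵥ ((L.map (fun r => (r : ℂ))) *ᵥ x)).re
        + h * (∑ k, Complex.normSq (x k)) := by
    have e2 : (∑ i, ∑ j, (α i : ℂ) * (P⁻¹ i j) * (α j : ℂ)).re
        = (star x ⬝ᵥ (P *ᵥ x)).re := by
      rw [← hconjT, Complex.conj_re]
    rw [e2]
    have h1 := expand_dot L h α x x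
    rw [← hPdef] at h1
    rw [h1, dotD, dot_self]
    simp [Complex.add_re, Complex.mul_re]
  have hc0 : 0 ≤ (star x ⬝ᵥ ((L.map (fun r => (r : ℂ))) *ᵥ x)).re := key_cx L hLpsd x
  -- assemble
  rw [hS]
  have hNpos : (0 : ℝ) < N := by exact_mod_cast hN
  set s : ℝ := ∑ k, Complex.normSq (x k) with hsdef
  have e3 : (1 / (N : ℂ)) * ((s : ℝ) : ℂ) = (((1 / (N : ℝ)) * s : ℝ) : ℂ) := by
    push_cast; ring
  have e4 : (1 / ((N : ℂ) * (h : ℂ))) = (((1 / ((N : ℝ) * h)) : ℝ) : ℂ) := by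
    push_cast; ring
  refine ⟨by rw [e3]; exact Complex.ofReal_im _, ?_, ?_⟩
  · rw [e3, Complex.ofReal_re]
    have : 0 ≤ (1 / (N : ℝ)) := by positivity
    exact mul_nonneg this hs0
  · rw [e3, Complex.ofReal_re, e4, Complex.re_ofReal_mul, hTre]
    set c : ℝ := (star x ⬝ᵥ ((L.map (fun r => (r : ℂ))) *ᵥ x)).re with hcdef
    have e5 : (1 / ((N : ℝ) * h)) * (c + h * s) = c / ((N : ℝ) * h) + (1 / (N : ℝ)) * s := by
      field_simp
    rw [e5]
    have : 0 ≤ c / ((N : ℝ) * h) := by positivity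
    linarith
end

section
/- For every index k ∈ {1,…,N} one has 0 ≤ Re( (L + hI + iα)^{-1}_{kk} ) ≤ (L + hI)^{-1}_{kk}. -/
open Matrix BigOperators

lemma ring_inv_diff {R : Type*} [Ring R] (a e ai ci : R) (h1 : a * ai = 1)
    (h1' : ai * a = 1) (h2 : (a + e) * ci = 1) (h2' : ci * (a + e) = 1) :
    ci * (e + e * ai * e) * ci = ai - ci := by
  have step : (a + e) * ai * (a + e) = a + e + (e * ai * a + e * ai * e) := by
    have expand0 : (a + e) * ai * (a + e)
        = a * (ai * a) + (e * (ai * a) + (a * (ai * e) + e * (ai * e))) := by noncomm_ring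
    rw [expand0, h1', mul_one, ← mul_assoc a ai e, h1, one_mul,
      mul_assoc e ai a, mul_assoc e ai e, h1']
    simp only [mul_one]
    abel
  have expand : e + e * ai * e = (a + e) * ai * (a + e) - (a + e) := by
    rw [step, mul_assoc e ai a, h1', mul_one]; abel
  have main : ci * ((a + e) * ai * (a + e) - (a + e)) * ci
      = ci * (a + e) * ai * ((a + e) * ci) - ci * ((a + e) * ci) := by
    noncomm_ring
  rw [expand, main, h2, h2', one_mul, mul_one, mul_one]

lemma psd_diag_nonneg {n : ℕ} {M : Matrix (Fin n) (Fin n) ℝ} (hM : M.PosSemidef) (k : Fin n) :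
    0 ≤ M k k := by
  have := hM.dotProduct_mulVec_nonneg (Pi.single k 1)
  simpa [Matrix.mulVec_single, single_dotProduct] using this

/-- For every `k`, `0 ≤ Re((L+hI+iα)⁻¹ₖₖ) ≤ (L+hI)⁻¹ₖₖ`. -/
theorem diagonal_real_part_bound (N : ℕ) (hN : 0 < N)
    (L : Matrix (Fin N) (Fin N) ℝ) (hLsymm : L.IsSymm) (hLpsd : L.PosSemidef)
    (h : ℝ) (hh : 0 < h) (α : Fin N → ℝ) (k : Fin N) :
    0 ≤ ((L.map (fun x => (x : ℂ)) + (h : ℂ) • 1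
          + Complex.I • Matrix.diagonal (fun i => (α i : ℂ)))⁻¹ k k).re
    ∧ ((L.map (fun x => (x : ℂ)) + (h : ℂ) • 1
          + Complex.I • Matrix.diagonal (fun i => (α i : ℂ)))⁻¹ k k).re
      ≤ (L + h • (1 : Matrix (Fin N) (Fin N) ℝ))⁻¹ k k := by
  classical
  set c : ℝ → ℂ := fun x => (x : ℂ) with hc
  set A : Matrix (Fin N) (Fin N) ℝ := L + h • 1 with hAdef
  have hsmulone : (h • (1 : Matrix (Fin N) (Fin N) ℝ)).PosDef := by
    rw [Matrix.smul_one_eq_diagonal]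
    exact Matrix.posDef_diagonal_iff.mpr (fun _ => hh)
  have hApd : A.PosDef := Matrix.PosDef.posSemidef_add hLpsd hsmulone
  set B : Matrix (Fin N) (Fin N) ℝ := Matrix.diagonal α with hBdef
  have hBH : Bᴴ = B := by simp [hBdef, Matrix.diagonal_conjTranspose]
  set E : Matrix (Fin N) (Fin N) ℝ := B * A⁻¹ * B with hEdef
  have hE : E.PosSemidef := by
    have := (hApd.inv.posSemidef).mul_mul_conjTranspose_same B
    rwa [hBH] at this
  set C : Matrix (Fin N) (Fin N) ℝ := A + E with hCdef
  have hCpd : C.PosDef := hApd.add_posSemidef hE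
  haveI := hApd.isUnit.invertible
  haveI := hCpd.isUnit.invertible
  have h1 : A * A⁻¹ = 1 := Matrix.mul_inv_of_invertible A
  have h1' : A⁻¹ * A = 1 := Matrix.inv_mul_of_invertible A
  have h2 : C * C⁻¹ = 1 := Matrix.mul_inv_of_invertible C
  have h2' : C⁻¹ * C = 1 := Matrix.inv_mul_of_invertible C
  have mapm : ∀ X Y : Matrix (Fin N) (Fin N) ℝ, (X * Y).map c = X.map c * Y.map c :=
    fun X Y => Matrix.map_mul (f := Complex.ofRealHom)
  have mapadd : ∀ X Y : Matrix (Fin N) (Fin N) ℝ, (X + Y).map c = X.map c + Y.map c :=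
    fun X Y => by ext i j; simp [Matrix.map_apply, hc, Matrix.add_apply]
  have mapone : (1 : Matrix (Fin N) (Fin N) ℝ).map c = 1 :=
    Matrix.map_one c Complex.ofReal_zero Complex.ofReal_one
  -- the complex matrix equals A.map c + I • B.map c
  have hMeq : L.map c + (h : ℂ) • 1 + Complex.I • Matrix.diagonal (fun i => (α i : ℂ))
      = A.map c + Complex.I • B.map c := by
    ext i j
    by_cases hij : i = j <;>
      simp [hAdef, hBdef, hc, Matrix.map_apply, Matrix.one_apply, Matrix.diagonal_apply,
        Matrix.add_apply, hij]
  have hax : A * (A⁻¹ * B * C⁻¹) = B * C⁻¹ := by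
    simp only [← Matrix.mul_assoc, h1, one_mul]
  have hsum : A * C⁻¹ + B * (A⁻¹ * B * C⁻¹) = 1 := by
    have e1 : A * C⁻¹ + B * (A⁻¹ * B * C⁻¹) = (A + B * A⁻¹ * B) * C⁻¹ := by
      simp only [Matrix.add_mul, Matrix.mul_assoc]
    rw [e1, ← hEdef, ← hCdef, h2]
  have key : (A.map c + Complex.I • B.map c)
      * ((C⁻¹).map c - Complex.I • ((A⁻¹ * B * C⁻¹).map c)) = 1 := by
    rw [Matrix.add_mul, Matrix.mul_sub, Matrix.mul_sub, smul_mul_assoc, smul_mul_assoc,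
      mul_smul_comm, mul_smul_comm, smul_smul, Complex.I_mul_I, neg_one_smul,
      ← mapm, ← mapm, ← mapm, ← mapm, hax]
    rw [sub_neg_eq_add]
    have : ∀ X Y Z : Matrix (Fin N) (Fin N) ℂ,
        X - Complex.I • Z + (Complex.I • Z + Y) = X + Y := by intro X Y Z; abel
    rw [this, ← mapadd, hsum, mapone]
  have hMinv : (L.map c + (h : ℂ) • 1 + Complex.I • Matrix.diagonal (fun i => (α i : ℂ)))⁻¹
      = (C⁻¹).map c - Complex.I • ((A⁻¹ * B * C⁻¹).map c) := by
    rw [hMeq]; exact Matrix.inv_eq_right_inv key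
  have hre : ((L.map c + (h : ℂ) • 1 + Complex.I • Matrix.diagonal (fun i => (α i : ℂ)))⁻¹ k k).re
      = C⁻¹ k k := by
    rw [hMinv]
    simp [Matrix.sub_apply, Matrix.smul_apply, Matrix.map_apply, hc, Complex.ofReal_re]
  have hCinv_psd : (C⁻¹).PosSemidef := hCpd.inv.posSemidef
  have hEH : Eᴴ = E := hE.isHermitian
  have hCinvH : (C⁻¹)ᴴ = C⁻¹ := hCpd.inv.isHermitian
  have hS : (E + E * A⁻¹ * E).PosSemidef := by
    refine hE.add ?_
    have := (hApd.inv.posSemidef).mul_mul_conjTranspose_same E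
    rwa [hEH] at this
  have hdiff_psd : (A⁻¹ - C⁻¹).PosSemidef := by
    have hid : C⁻¹ * (E + E * A⁻¹ * E) * (C⁻¹)ᴴ = A⁻¹ - C⁻¹ := by
      rw [hCinvH]
      exact ring_inv_diff A E A⁻¹ C⁻¹ h1 h1' (hCdef ▸ h2) (hCdef ▸ h2')
    rw [← hid]
    exact hS.mul_mul_conjTranspose_same (C⁻¹)
  refine ⟨?_, ?_⟩
  · rw [hre]; exact psd_diag_nonneg hCinv_psd k
  · rw [hre]
    have := psd_diag_nonneg hdiff_psd k
    rw [Matrix.sub_apply] at this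
    linarith
end

section
/- For every index k ∈ {1,…,N} one has | Im( (L + hI + iα)^{-1}_{kk} ) | ≤ (1/2) (L + hI)^{-1}_{kk}. -/
open Matrix BigOperators ComplexOrder

noncomputable section
variable {N : ℕ}

private def cmap (A : Matrix (Fin N) (Fin N) ℝ) : Matrix (Fin N) (Fin N) ℂ :=
  A.map (Complex.ofRealHom ·)

private lemma cmap_psd {A : Matrix (Fin N) (Fin N) ℝ} (hA : A.PosSemidef) :
    (cmap A).PosSemidef := by
  obtain ⟨C, hC⟩ : ∃ C : Matrix (Fin N) (Fin N) ℝ, A = Cᴴ * C := by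
    open scoped MatrixOrder in
    refine ⟨CFC.sqrt A, ?_⟩
    open scoped MatrixOrder in
    have h1 := (CFC.sqrt_nonneg A).posSemidef.isHermitian
    rw [IsHermitian] at h1
    open scoped MatrixOrder in
    rw [h1, CFC.sqrt_mul_sqrt_self A hA.nonneg]
  have : cmap A = ((cmap C)ᴴ * (cmap C)) := by
    rw [cmap, hC, Matrix.map_mul (f := Complex.ofRealHom), Matrix.conjTranspose_map]
    · rfl
    · intro x; simp
  rw [this]
  exact Matrix.posSemidef_conjTranspose_mul_self _

private lemma cmap_isUnit {A : Matrix (Fin N) (Fin N) ℝ} (hA : IsUnit A.det) :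
    IsUnit (cmap A) := by
  rw [Matrix.isUnit_iff_isUnit_det]
  have : (cmap A).det = Complex.ofRealHom A.det := by
    rw [cmap]
    exact ((Complex.ofRealHom : ℝ →+* ℂ).map_det A).symm
  rw [this]
  exact hA.map (Complex.ofRealHom : ℝ →+* ℂ)

private lemma cmap_inv {A : Matrix (Fin N) (Fin N) ℝ} (hA : IsUnit A.det) :
    (cmap A)⁻¹ = cmap A⁻¹ := by
  apply Matrix.inv_eq_right_inv
  rw [cmap, cmap, ← Matrix.map_mul (f := Complex.ofRealHom), Matrix.mul_nonsing_inv _ hA]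
  ext i j
  simp [Matrix.one_apply]

private lemma diag_quad_real (α : Fin N → ℝ) (x : Fin N → ℂ) :
    star x ⬝ᵥ ((Matrix.diagonal fun i => (α i : ℂ)) *ᵥ x)
      = ((∑ j, α j * Complex.normSq (x j) : ℝ) : ℂ) := by
  simp only [dotProduct, mulVec_diagonal, Pi.star_apply, Complex.ofReal_sum]
  refine Finset.sum_congr rfl fun j _ => ?_
  push_cast
  rw [Complex.normSq_eq_conj_mul_self, Complex.star_def]
  ring

private lemma quad_zero {A : Matrix (Fin N) (Fin N) ℝ} (hA : A.PosDef) (x : Fin N → ℂ)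
    (hq : star x ⬝ᵥ (cmap A *ᵥ x) = 0) : x = 0 := by
  have h0 : cmap A *ᵥ x = 0 := ((cmap_psd hA.posSemidef).dotProduct_mulVec_zero_iff x).mp hq
  have hinj := Matrix.mulVec_injective_iff_isUnit.mpr
    (cmap_isUnit (A := A) hA.det_pos.ne'.isUnit)
  apply hinj
  simpa using h0

private lemma B_inj {A : Matrix (Fin N) (Fin N) ℝ} (hA : A.PosDef) (α : Fin N → ℝ)
    (x : Fin N → ℂ)
    (hx : (cmap A + Complex.I • Matrix.diagonal (fun i => (α i : ℂ))) *ᵥ x = 0) : x = 0 := by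
  have hexp : (0 : ℂ) = star x ⬝ᵥ (cmap A *ᵥ x)
      + Complex.I * (star x ⬝ᵥ ((Matrix.diagonal fun i => (α i : ℂ)) *ᵥ x)) := by
    have := congrArg (fun v => star x ⬝ᵥ v) hx
    simpa [Matrix.add_mulVec, Matrix.smul_mulVec, dotProduct_add,
      dotProduct_smul, smul_eq_mul] using this.symm
  set q := star x ⬝ᵥ (cmap A *ᵥ x) with hqdef
  have hqnn : 0 ≤ q := (cmap_psd hA.posSemidef).dotProduct_mulVec_nonneg x
  rw [diag_quad_real] at hexp
  set dr := (∑ j, α j * Complex.normSq (x j) : ℝ)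
  have hqre : q.re = 0 := by
    have := congrArg Complex.re hexp
    simpa using this.symm
  have hqim : q.im = 0 := (Complex.nonneg_iff.mp hqnn).2.symm
  exact quad_zero hA x (Complex.ext hqre hqim)

private lemma posdef_diag_pos {M : Matrix (Fin N) (Fin N) ℝ} (hM : M.PosDef) (k : Fin N) :
    0 < M k k := by
  have := hM.dotProduct_mulVec_pos (x := Pi.single k 1) (by
    intro hc
    have := congrFun hc k
    simp at this)
  simpa [single_dotProduct] using this

/-- For every `k`, `|Im((L+hI+iα)⁻¹ₖₖ)| ≤ (1/2)(L+hI)⁻¹ₖₖ`. -/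
theorem diagonal_imaginary_part_bound (N : ℕ) (hN : 0 < N)
    (L : Matrix (Fin N) (Fin N) ℝ) (hLsymm : L.IsSymm) (hLpsd : L.PosSemidef)
    (h : ℝ) (hh : 0 < h) (α : Fin N → ℝ) (k : Fin N) :
    |((L.map (fun x => (x : ℂ)) + (h : ℂ) • 1
        + Complex.I • Matrix.diagonal (fun i => (α i : ℂ)))⁻¹ k k).im|
      ≤ (1 / 2) * (L + h • (1 : Matrix (Fin N) (Fin N) ℝ))⁻¹ k k := by
  set A := L + h • (1 : Matrix (Fin N) (Fin N) ℝ) with hAdef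
  have hA : A.PosDef := by
    have h1 : (h • (1 : Matrix (Fin N) (Fin N) ℝ)).PosDef := by
      rw [Matrix.smul_one_eq_diagonal]
      exact Matrix.posDef_diagonal_iff.mpr fun i => hh
    exact Matrix.PosDef.posSemidef_add hLpsd h1
  have hAsymm : Aᵀ = A := by
    rw [hAdef, Matrix.transpose_add, Matrix.transpose_smul, Matrix.transpose_one, hLsymm.eq]
  set D := Matrix.diagonal (fun i => (α i : ℂ)) with hDdef
  set B := cmap A + Complex.I • D with hBdef
  have hmap : L.map (fun x => (x : ℂ)) + (h : ℂ) • 1 + Complex.I • D = B := by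
    rw [hBdef]
    congr 1
    ext i j
    by_cases hij : i = j <;>
      simp [cmap, hAdef, Matrix.one_apply, hij]
  rw [hmap]
  -- invertibility of B
  have hBunit : IsUnit B := by
    rw [← Matrix.mulVec_injective_iff_isUnit]
    intro u v huv
    have h0 : B *ᵥ (u - v) = 0 := by
      rw [Matrix.mulVec_sub, huv, sub_self]
    exact sub_eq_zero.mp (B_inj hA α _ h0)
  have hBdet : IsUnit B.det := (Matrix.isUnit_iff_isUnit_det B).mp hBunit
  set e : Fin N → ℂ := Pi.single k 1 with hedef
  set x := B⁻¹ *ᵥ e with hxdef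
  have hBx : B *ᵥ x = e := by
    rw [hxdef, Matrix.mulVec_mulVec, Matrix.mul_nonsing_inv _ hBdet, Matrix.one_mulVec]
  have hxk : x k = B⁻¹ k k := by
    simp [hxdef, hedef]
  -- the auxiliary real vector y
  have hAdet : IsUnit A.det := hA.det_pos.ne'.isUnit
  set y := (cmap A)⁻¹ *ᵥ e with hydef
  have hAy : cmap A *ᵥ y = e := by
    rw [hydef, Matrix.mulVec_mulVec,
      Matrix.mul_nonsing_inv _ ((Matrix.isUnit_iff_isUnit_det _).mp (cmap_isUnit hAdet)),
      Matrix.one_mulVec]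
  set q' := A⁻¹ k k with hq'def
  have hq'pos : 0 < q' := posdef_diag_pos hA.inv k
  have hyj : ∀ j, y j = ((A⁻¹ j k : ℝ) : ℂ) := by
    intro j
    rw [hydef, cmap_inv hAdet, hedef]
    simp [cmap]
  have hystar : star y = y := by
    funext j
    simp [hyj j, Complex.conj_ofReal]
  -- quadratic form values
  set q := star x ⬝ᵥ (cmap A *ᵥ x) with hqdef
  have hqnn : 0 ≤ q := (cmap_psd hA.posSemidef).dotProduct_mulVec_nonneg x
  have ht2 : star x ⬝ᵥ (cmap A *ᵥ y) = (starRingEnd ℂ) (x k) := by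
    rw [hAy, hedef]
    simp
  have hcsymm : (cmap A)ᵀ = cmap A := by
    rw [cmap, ← Matrix.transpose_map, hAsymm]
  have ht3 : star y ⬝ᵥ (cmap A *ᵥ x) = x k := by
    rw [hystar, Matrix.dotProduct_mulVec, ← hcsymm, Matrix.vecMul_transpose, hAy, hedef]
    simp [single_dotProduct]
  have ht4 : star y ⬝ᵥ (cmap A *ᵥ y) = ((q' : ℝ) : ℂ) := by
    rw [hystar, hAy, hedef]
    simp [dotProduct_single, hyj k, hq'def]
  -- compute conj (x k) = q + I * d
  have hkey : (starRingEnd ℂ) (x k) = q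
      + Complex.I * (star x ⬝ᵥ (D *ᵥ x)) := by
    have h1 : star x ⬝ᵥ (B *ᵥ x) = (starRingEnd ℂ) (x k) := by
      rw [hBx, hedef]
      simp
    rw [← h1, hBdef]
    simp [Matrix.add_mulVec, Matrix.smul_mulVec, dotProduct_add, dotProduct_smul,
      smul_eq_mul, hqdef]
  rw [hDdef, diag_quad_real] at hkey
  set dr := (∑ j, α j * Complex.normSq (x j) : ℝ) with hdrdef
  have hqre : q.re = (x k).re := by
    have := congrArg Complex.re hkey
    simpa using this.symm
  have hqa : q = (((x k).re : ℝ) : ℂ) :=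
    Complex.ext (by simpa using hqre) (by simpa using (Complex.nonneg_iff.mp hqnn).2.symm)
  have ha : 0 ≤ (x k).re := by
    have := (Complex.nonneg_iff.mp hqnn).1
    rwa [hqre] at this
  -- Cauchy-Schwarz via the vector v
  set v := ((q' : ℝ) : ℂ) • x - x k • y with hvdef
  have hS : star v ⬝ᵥ (cmap A *ᵥ v)
      = ((q' ^ 2 * (x k).re - q' * Complex.normSq (x k) : ℝ) : ℂ) := by
    have e1 : cmap A *ᵥ v = ((q' : ℝ) : ℂ) • (cmap A *ᵥ x) - x k • (cmap A *ᵥ y) := by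
      rw [hvdef, Matrix.mulVec_sub, Matrix.mulVec_smul, Matrix.mulVec_smul]
    have e2 : star v = ((q' : ℝ) : ℂ) • star x - (starRingEnd ℂ) (x k) • star y := by
      rw [hvdef, star_sub, star_smul, star_smul]
      simp [Complex.star_def, Complex.conj_ofReal]
    rw [e2, e1]
    simp only [sub_dotProduct, dotProduct_sub, smul_dotProduct, dotProduct_smul, smul_eq_mul]
    rw [← hqdef, ht2, ht3, ht4, hqa]
    rw [show (starRingEnd ℂ) (x k) * (x k) = ((Complex.normSq (x k) : ℝ) : ℂ) by
      rw [Complex.normSq_eq_conj_mul_self]]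
    push_cast
    ring
  have hSnn : (0 : ℝ) ≤ q' ^ 2 * (x k).re - q' * Complex.normSq (x k) := by
    have := (cmap_psd hA.posSemidef).dotProduct_mulVec_nonneg v
    rw [hS] at this
    exact_mod_cast (Complex.nonneg_iff.mp this).1
  have hCS : Complex.normSq (x k) ≤ q' * (x k).re := by
    nlinarith [hq'pos]
  rw [← hxk]
  have hnormSq : Complex.normSq (x k) = (x k).re ^ 2 + (x k).im ^ 2 := by
    rw [Complex.normSq_apply]; ring
  nlinarith [sq_abs ((x k).im), abs_nonneg ((x k).im), sq_nonneg ((x k).re - q' / 2),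
    sq_nonneg (|(x k).im| - q' / 2), hq'pos, hCS, hnormSq, ha]
end
end

section
/- One has Σ_{i=1}^N α_i² ≤ f(α) · ( Σ_{i,k,j=1}^N α_i (L + hI − iα)^{-1}_{ik} (L + hI + iα)^{-1}_{kj} α_j )^{1/2}, where f(α) = ( αᵗ((L + hI)² + α²)α )^{1/2} with α viewed also as the vector (α_1,…,α_N); moreover f(α) ≤ ( Σ_{i=1}^N ( α_i² (l_max + h)² + α_i⁴ ) )^{1/2}, where l_max is the largest eigenvalue of L. -/
open Matrix BigOperators

section Aux
open ComplexOrder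

lemma psd_mapC {N : ℕ} {L : Matrix (Fin N) (Fin N) ℝ} (hL : L.PosSemidef) :
    (L.map (fun x : ℝ => (x : ℂ))).PosSemidef := by
  obtain ⟨B, rfl⟩ : ∃ B : Matrix (Fin N) (Fin N) ℝ, L = Bᴴ * B := by
    open scoped MatrixOrder in exact CStarAlgebra.nonneg_iff_eq_star_mul_self.mp hL.nonneg
  have hco : (fun x : ℝ => (x : ℂ)) = ⇑Complex.ofRealHom := rfl
  have hmap : (Bᴴ * B).map (fun x : ℝ => (x : ℂ))
      = (B.map (fun x : ℝ => (x : ℂ)))ᴴ * (B.map (fun x : ℝ => (x : ℂ))) := by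
    rw [← Matrix.conjTranspose_map (fun x : ℝ => (x : ℂ)) (by intro a; simp), hco,
      Matrix.map_mul]
  rw [hmap]
  exact Matrix.posSemidef_conjTranspose_mul_self _

lemma det_isUnit {N : ℕ} (P : Matrix (Fin N) (Fin N) ℂ) (hP : P.PosSemidef)
    (h : ℝ) (hh : 0 < h) (d : Fin N → ℝ) :
    IsUnit (P + (h : ℂ) • 1 - Complex.I • Matrix.diagonal (fun i => (d i : ℂ))).det := by
  set M := P + (h : ℂ) • 1 - Complex.I • Matrix.diagonal (fun i => (d i : ℂ)) with hM
  rw [isUnit_iff_ne_zero]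
  intro hdet
  obtain ⟨v, hv0, hMv⟩ := (Matrix.exists_mulVec_eq_zero_iff).mpr hdet
  have h0 : star v ⬝ᵥ (M *ᵥ v) = 0 := by rw [hMv, dotProduct_zero]
  have hexp : star v ⬝ᵥ (M *ᵥ v)
      = star v ⬝ᵥ (P *ᵥ v) + (h : ℂ) * (star v ⬝ᵥ v)
        - Complex.I * (star v ⬝ᵥ (Matrix.diagonal (fun i => (d i : ℂ)) *ᵥ v)) := by
    rw [hM, Matrix.sub_mulVec, Matrix.add_mulVec, Matrix.smul_mulVec,
      Matrix.smul_mulVec, Matrix.one_mulVec, dotProduct_sub, dotProduct_add,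
      dotProduct_smul, dotProduct_smul, smul_eq_mul, smul_eq_mul]
  have ht2 : star v ⬝ᵥ v = ((∑ i, Complex.normSq (v i) : ℝ) : ℂ) := by
    push_cast
    simp only [dotProduct, Pi.star_apply, RCLike.star_def]
    exact Finset.sum_congr rfl fun i _ => (Complex.normSq_eq_conj_mul_self (z := v i)).symm
  have ht3 : star v ⬝ᵥ (Matrix.diagonal (fun i => (d i : ℂ)) *ᵥ v)
      = ((∑ i, d i * Complex.normSq (v i) : ℝ) : ℂ) := by
    push_cast
    simp only [dotProduct, Matrix.mulVec_diagonal, Pi.star_apply, RCLike.star_def]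
    refine Finset.sum_congr rfl fun i _ => ?_
    rw [mul_left_comm, ← Complex.normSq_eq_conj_mul_self]
  have hre : (star v ⬝ᵥ (M *ᵥ v)).re
      = (star v ⬝ᵥ (P *ᵥ v)).re + h * (∑ i, Complex.normSq (v i)) := by
    rw [hexp, ht2, ht3]
    simp [Complex.mul_re]
  have ht1 : 0 ≤ (star v ⬝ᵥ (P *ᵥ v)).re := by
    have := hP.re_dotProduct_nonneg v
    simpa using this
  have hr2 : 0 < ∑ i, Complex.normSq (v i) := by
    obtain ⟨i, hi⟩ := Function.ne_iff.mp hv0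
    exact Finset.sum_pos' (fun j _ => Complex.normSq_nonneg _)
      ⟨i, Finset.mem_univ i, by simpa [Complex.normSq_pos] using hi⟩
  rw [h0] at hre
  simp only [Complex.zero_re] at hre
  nlinarith

lemma quad_bound {N : ℕ} (L : Matrix (Fin N) (Fin N) ℝ) (hLpsd : L.PosSemidef)
    (h lmax : ℝ) (hh : 0 < h) (hlm : ∀ i, hLpsd.1.eigenvalues i ≤ lmax) (α : Fin N → ℝ) :
    α ⬝ᵥ ((L + h • 1) * (L + h • 1)) *ᵥ α ≤ (lmax + h)^2 * ∑ i, (α i)^2 := by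
  set U : Matrix (Fin N) (Fin N) ℝ := (hLpsd.1.eigenvectorUnitary : Matrix (Fin N) (Fin N) ℝ)
    with hUdef
  set f := hLpsd.1.eigenvalues with hf
  have hspec : L = U * Matrix.diagonal f * Uᴴ := by
    have := hLpsd.1.spectral_theorem
    rw [← Matrix.star_eq_conjTranspose]
    simpa using this
  have hU1 : U * Uᴴ = 1 := by
    rw [← Matrix.star_eq_conjTranspose]
    exact (Matrix.mem_unitaryGroup_iff).mp hLpsd.1.eigenvectorUnitary.2
  have hU2 : Uᴴ * U = 1 := by
    rw [← Matrix.star_eq_conjTranspose]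
    exact (Matrix.mem_unitaryGroup_iff').mp hLpsd.1.eigenvectorUnitary.2
  set g : Fin N → ℝ := fun i => f i + h with hg
  have hA : L + h • 1 = U * Matrix.diagonal g * Uᴴ := by
    have hdg : Matrix.diagonal g = Matrix.diagonal f + h • 1 := by
      rw [Matrix.smul_one_eq_diagonal, Matrix.diagonal_add]
    rw [hdg, Matrix.mul_add, Matrix.add_mul, ← hspec, mul_smul_comm, smul_mul_assoc,
      Matrix.mul_one, hU1]
  have hA2 : (L + h • 1) * (L + h • 1)
      = U * Matrix.diagonal (fun i => g i * g i) * Uᴴ := by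
    rw [hA]
    simp only [← Matrix.mul_assoc]
    rw [Matrix.mul_assoc (U * Matrix.diagonal g) Uᴴ U, hU2, Matrix.mul_one,
      Matrix.mul_assoc U (Matrix.diagonal g) (Matrix.diagonal g),
      Matrix.diagonal_mul_diagonal]
  have heq : (lmax + h)^2 • (1 : Matrix (Fin N) (Fin N) ℝ) - (L + h • 1) * (L + h • 1)
      = U * Matrix.diagonal (fun i => (lmax + h)^2 - g i * g i) * Uᴴ := by
    have hdg : Matrix.diagonal (fun i => (lmax + h)^2 - g i * g i)
        = (lmax + h)^2 • 1 - Matrix.diagonal (fun i => g i * g i) := by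
      rw [Matrix.smul_one_eq_diagonal, Matrix.diagonal_sub]
    rw [hdg, Matrix.mul_sub, Matrix.sub_mul, ← hA2, mul_smul_comm, smul_mul_assoc,
      Matrix.mul_one, hU1]
  have hP : ((lmax + h)^2 • (1 : Matrix (Fin N) (Fin N) ℝ)
      - (L + h • 1) * (L + h • 1)).PosSemidef := by
    rw [heq]
    refine Matrix.PosSemidef.mul_mul_conjTranspose_same ?_ U
    refine Matrix.posSemidef_diagonal_iff.mpr fun i => ?_
    have h1 := hLpsd.eigenvalues_nonneg i
    have h2 := hlm i
    simp only [hg]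
    nlinarith
  have hq := hP.dotProduct_mulVec_nonneg α
  simp only [Matrix.sub_mulVec, Matrix.smul_mulVec, Matrix.one_mulVec,
    dotProduct_sub, dotProduct_smul, smul_eq_mul, star_trivial] at hq
  have hd : α ⬝ᵥ α = ∑ i, (α i)^2 := by
    simp [dotProduct, pow_two]
  rw [hd] at hq
  linarith

end Aux

/-- `Σᵢ αᵢ² ≤ f(α) · (Σᵢₖⱼ αᵢ (L+hI−iα)⁻¹ᵢₖ (L+hI+iα)⁻¹ₖⱼ αⱼ)^{1/2}`, where
`f(α) = (αᵗ((L+hI)² + α²)α)^{1/2}`; moreover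
`f(α) ≤ (Σᵢ (αᵢ²(l_max+h)² + αᵢ⁴))^{1/2}` where `l_max` is the largest eigenvalue of `L`. -/
theorem alpha_squared_bound (N : ℕ) (hN : 0 < N)
    (L : Matrix (Fin N) (Fin N) ℝ) (hLsymm : L.IsSymm) (hLpsd : L.PosSemidef)
    (h : ℝ) (hh : 0 < h) (α : Fin N → ℝ)
    (lmax : ℝ) (hlmax : IsGreatest (Set.range hLpsd.1.eigenvalues) lmax) :
    (∑ i, (α i) ^ 2
      ≤ Real.sqrt (α ⬝ᵥ ((L + h • (1 : Matrix (Fin N) (Fin N) ℝ))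
            * (L + h • (1 : Matrix (Fin N) (Fin N) ℝ))
          + Matrix.diagonal α * Matrix.diagonal α).mulVec α)
        * Real.sqrt ((∑ i, ∑ k, ∑ j, (α i : ℂ) *
            ((L.map (fun x => (x : ℂ)) + (h : ℂ) • 1
                - Complex.I • Matrix.diagonal (fun i => (α i : ℂ)))⁻¹ i k) *
            ((L.map (fun x => (x : ℂ)) + (h : ℂ) • 1
                + Complex.I • Matrix.diagonal (fun i => (α i : ℂ)))⁻¹ k j) * (α j : ℂ)).re))
    ∧ Real.sqrt (α ⬝ᵥ ((L + h • (1 : Matrix (Fin N) (Fin N) ℝ))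
            * (L + h • (1 : Matrix (Fin N) (Fin N) ℝ))
          + Matrix.diagonal α * Matrix.diagonal α).mulVec α)
      ≤ Real.sqrt (∑ i, ((α i) ^ 2 * (lmax + h) ^ 2 + (α i) ^ 4)) := by
  classical
  set αc : Fin N → ℂ := fun i => (α i : ℂ) with hαc
  set Lc : Matrix (Fin N) (Fin N) ℂ := L.map (fun x => (x : ℂ)) with hLc
  set Mm : Matrix (Fin N) (Fin N) ℂ := Lc + (h : ℂ) • 1 - Complex.I • Matrix.diagonal αc
    with hMmdef
  set Mp : Matrix (Fin N) (Fin N) ℂ := Lc + (h : ℂ) • 1 + Complex.I • Matrix.diagonal αc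
    with hMpdef
  set A : Matrix (Fin N) (Fin N) ℝ := L + h • 1 with hAdef
  set a : Fin N → ℝ := A *ᵥ α with hadef
  -- symmetry facts
  have hLsymm' : ∀ i j, L j i = L i j := fun i j => by
    conv_lhs => rw [← hLsymm]
    rfl
  have hLcH : Lcᴴ = Lc := by
    ext i j
    simp [hLc, Matrix.conjTranspose_apply, Matrix.map_apply, hLsymm' i j]
  have hLcT : Lcᵀ = Lc := by
    ext i j
    simp [hLc, Matrix.transpose_apply, Matrix.map_apply, hLsymm' i j]
  have hstar : star αc = αc := by
    funext i
    simp [hαc]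
  have hMmH : Mmᴴ = Mp := by
    rw [hMmdef, hMpdef, Matrix.conjTranspose_sub, Matrix.conjTranspose_add,
      Matrix.conjTranspose_smul, Matrix.conjTranspose_smul, Matrix.conjTranspose_one, hLcH,
      Matrix.diagonal_conjTranspose, hstar, RCLike.star_def, Complex.conj_I,
      Complex.conj_ofReal, neg_smul, sub_neg_eq_add]
  have hMmT : Mmᵀ = Mm := by
    rw [hMmdef, Matrix.transpose_sub, Matrix.transpose_add, Matrix.transpose_smul,
      Matrix.transpose_smul, Matrix.transpose_one, hLcT, Matrix.diagonal_transpose]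
  have hMmUnit : IsUnit Mm.det := det_isUnit Lc (psd_mapC hLpsd) h hh α
  have hMpinv : Mp⁻¹ = (Mm⁻¹)ᴴ := by rw [← hMmH, Matrix.conjTranspose_nonsing_inv]
  have hBT : (Mm⁻¹)ᵀ = Mm⁻¹ := by rw [Matrix.transpose_nonsing_inv, hMmT]
  set w : Fin N → ℂ := Mm⁻¹ *ᵥ αc with hwdef
  have hvec : αc ᵥ* Mm⁻¹ = w := by
    rw [← Matrix.mulVec_transpose, hBT, hwdef]
  have hcol : ∀ k, ∑ i, αc i * Mm⁻¹ i k = w k := by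
    intro k
    rw [← hvec]
    simp [Matrix.vecMul, dotProduct]
  have hS : (∑ i, ∑ k, ∑ j, αc i * Mm⁻¹ i k * Mp⁻¹ k j * αc j)
      = ∑ k, w k * (starRingEnd ℂ) (w k) := by
    rw [Finset.sum_comm]
    refine Finset.sum_congr rfl fun k _ => ?_
    have hE : ∑ j, Mp⁻¹ k j * αc j = (starRingEnd ℂ) (w k) := by
      rw [hMpinv]
      have hterm : ∀ j, (Mm⁻¹)ᴴ k j * αc j = (starRingEnd ℂ) (Mm⁻¹ j k * αc j) := by
        intro j
        rw [Matrix.conjTranspose_apply, _root_.map_mul]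
        congr 1
        simp [hαc]
      rw [Finset.sum_congr rfl (fun j _ => hterm j), ← map_sum]
      congr 1
      rw [← hcol k]
      exact Finset.sum_congr rfl fun j _ => mul_comm _ _
    calc ∑ i, ∑ j, αc i * Mm⁻¹ i k * Mp⁻¹ k j * αc j
        = ∑ i, (αc i * Mm⁻¹ i k) * ∑ j, Mp⁻¹ k j * αc j := by
          refine Finset.sum_congr rfl fun i _ => ?_
          rw [Finset.mul_sum]
          exact Finset.sum_congr rfl fun j _ => by ring
      _ = (∑ i, αc i * Mm⁻¹ i k) * ∑ j, Mp⁻¹ k j * αc j := by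
          rw [Finset.sum_mul]
      _ = w k * (starRingEnd ℂ) (w k) := by rw [hcol k, hE]
  have hSre : (∑ i, ∑ k, ∑ j, αc i * Mm⁻¹ i k * Mp⁻¹ k j * αc j).re
      = ∑ k, Complex.normSq (w k) := by
    rw [hS, Complex.re_sum]
    exact Finset.sum_congr rfl fun k _ => by rw [Complex.mul_conj, Complex.ofReal_re]
  set u : Fin N → ℂ := Mm *ᵥ αc with hudef
  have hukey : ∀ k, u k = ((a k : ℝ) : ℂ) - Complex.I * (((α k)^2 : ℝ) : ℂ) := by
    intro k
    show (Mm *ᵥ αc) k = _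
    rw [hMmdef, Matrix.sub_mulVec, Matrix.add_mulVec, Matrix.smul_mulVec,
      Matrix.smul_mulVec, Matrix.one_mulVec]
    simp only [Pi.sub_apply, Pi.add_apply, Pi.smul_apply, smul_eq_mul, Matrix.mulVec_diagonal]
    have hLck : (Lc *ᵥ αc) k = (((L *ᵥ α) k : ℝ) : ℂ) := by
      simp only [hLc, Matrix.mulVec, dotProduct, Matrix.map_apply, hαc]
      push_cast
      rfl
    rw [hLck]
    have hak : a k = (L *ᵥ α) k + h * α k := by
      simp [hadef, hAdef, Matrix.add_mulVec, Matrix.smul_mulVec, Matrix.one_mulVec]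
    rw [hak]
    simp only [hαc]
    push_cast
    ring
  have hnormu : ∀ k, Complex.normSq (u k) = (a k)^2 + (α k)^4 := by
    intro k
    rw [hukey k]
    simp only [Complex.normSq_apply, Complex.sub_re, Complex.sub_im, Complex.mul_re,
      Complex.mul_im, Complex.I_re, Complex.I_im, Complex.ofReal_re, Complex.ofReal_im]
    ring
  have hdot : ∑ k, u k * w k = ∑ i, αc i * αc i := by
    have h1 : u = αc ᵥ* Mm := by
      rw [hudef, ← Matrix.mulVec_transpose, hMmT]
    calc ∑ k, u k * w k = u ⬝ᵥ w := rfl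
      _ = (αc ᵥ* Mm) ⬝ᵥ w := by rw [h1]
      _ = αc ⬝ᵥ (Mm *ᵥ w) := (Matrix.dotProduct_mulVec αc Mm w).symm
      _ = αc ⬝ᵥ αc := by
          rw [hwdef, Matrix.mulVec_mulVec, Matrix.mul_nonsing_inv _ hMmUnit, Matrix.one_mulVec]
      _ = ∑ i, αc i * αc i := rfl
  have hsum1 : ∑ i, (α i)^2 = (∑ k, u k * w k).re := by
    rw [hdot, Complex.re_sum]
    refine Finset.sum_congr rfl fun i _ => ?_
    simp [hαc, ← Complex.ofReal_mul, pow_two]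
  have hstep1 : (∑ k, u k * w k).re ≤ ∑ k, ‖u k‖ * ‖w k‖ := by
    rw [Complex.re_sum]
    refine Finset.sum_le_sum fun k _ => ?_
    calc (u k * w k).re ≤ ‖u k * w k‖ := Complex.re_le_norm _
      _ = ‖u k‖ * ‖w k‖ := norm_mul _ _
  have hCS : ∑ k, ‖u k‖ * ‖w k‖
      ≤ Real.sqrt (∑ k, Complex.normSq (u k)) * Real.sqrt (∑ k, Complex.normSq (w k)) := by
    have hnn1 : 0 ≤ ∑ k, Complex.normSq (u k) :=
      Finset.sum_nonneg fun k _ => Complex.normSq_nonneg _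
    have hnn2 : 0 ≤ ∑ k, Complex.normSq (w k) :=
      Finset.sum_nonneg fun k _ => Complex.normSq_nonneg _
    have hnn3 : 0 ≤ ∑ k, ‖u k‖ * ‖w k‖ :=
      Finset.sum_nonneg fun k _ => mul_nonneg (norm_nonneg _) (norm_nonneg _)
    rw [← Real.sqrt_mul hnn1]
    refine (Real.le_sqrt hnn3 (mul_nonneg hnn1 hnn2)).mpr ?_
    have h2 := Finset.sum_mul_sq_le_sq_mul_sq Finset.univ
      (fun k => ‖u k‖) (fun k => ‖w k‖)
    simpa [Complex.sq_norm] using h2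
  have h1q : α ⬝ᵥ (A * A) *ᵥ α = ∑ k, (a k)^2 := by
    have hAsymm : Aᵀ = A := by
      rw [hAdef, Matrix.transpose_add, Matrix.transpose_smul, Matrix.transpose_one, hLsymm]
    have hva : α ᵥ* A = a := by
      rw [← Matrix.mulVec_transpose, hAsymm, ← hadef]
    rw [← Matrix.mulVec_mulVec, Matrix.dotProduct_mulVec, hva, ← hadef]
    simp [dotProduct, pow_two]
  have h2q : α ⬝ᵥ (Matrix.diagonal α * Matrix.diagonal α) *ᵥ α = ∑ k, (α k)^4 := by
    rw [← Matrix.mulVec_mulVec]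
    simp only [dotProduct, Matrix.mulVec_diagonal]
    exact Finset.sum_congr rfl fun k _ => by ring
  have hquad : α ⬝ᵥ ((A * A) + Matrix.diagonal α * Matrix.diagonal α) *ᵥ α
      = ∑ k, ((a k)^2 + (α k)^4) := by
    rw [Matrix.add_mulVec, dotProduct_add, h1q, h2q, Finset.sum_add_distrib]
  have hnormu_sum : ∑ k, Complex.normSq (u k)
      = α ⬝ᵥ ((A * A) + Matrix.diagonal α * Matrix.diagonal α) *ᵥ α := by
    rw [hquad]
    exact Finset.sum_congr rfl fun k _ => hnormu k
  constructor
  · calc ∑ i, (α i)^2 = (∑ k, u k * w k).re := hsum1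
      _ ≤ ∑ k, ‖u k‖ * ‖w k‖ := hstep1
      _ ≤ Real.sqrt (∑ k, Complex.normSq (u k)) * Real.sqrt (∑ k, Complex.normSq (w k)) := hCS
      _ = _ := by rw [hnormu_sum, ← hSre]
  · apply Real.sqrt_le_sqrt
    have hb := quad_bound L hLpsd h lmax hh (fun i => hlmax.2 ⟨i, rfl⟩) α
    rw [← hAdef] at hb
    rw [Matrix.add_mulVec, dotProduct_add, h2q]
    have hrhs : ∑ i, ((α i)^2 * (lmax + h)^2 + (α i)^4)
        = (lmax + h)^2 * (∑ i, (α i)^2) + ∑ i, (α i)^4 := by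
      rw [Finset.sum_add_distrib, Finset.mul_sum]
      congr 1
      exact Finset.sum_congr rfl fun i _ => by ring
    rw [hrhs]
    linarith
end

section
/- If Re( (h²/N) Σ_{i,j=1}^N (L + hI + iα)^{-2}_{ij} ) = 1, then Re( (h/N) Σ_{i,j=1}^N (L + hI + iα)^{-1}_{ij} ) = 1. -/
open Matrix BigOperators

lemma quad_aux (N : ℕ) (L : Matrix (Fin N) (Fin N) ℝ) (h : ℝ) (α : Fin N → ℝ)
    (v : Fin N → ℂ) :
    (∑ i, (starRingEnd ℂ) (v i) *
      ((L.map (fun x => (x : ℂ)) + (h : ℂ) • 1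
        + Complex.I • Matrix.diagonal (fun i => (α i : ℂ))) *ᵥ v) i).re
    = (∑ i, ∑ j, L i j * ((v i).re * (v j).re + (v i).im * (v j).im))
      + h * ∑ i, Complex.normSq (v i) := by
  have hrow : ∀ i, ((L.map (fun x => (x : ℂ)) + (h : ℂ) • 1
        + Complex.I • Matrix.diagonal (fun i => (α i : ℂ))) *ᵥ v) i
      = (∑ j, (L i j : ℂ) * v j) + (h : ℂ) * v i + Complex.I * (α i : ℂ) * v i := by
    intro i
    simp [mulVec, dotProduct, Matrix.add_apply, Matrix.smul_apply, Matrix.map_apply,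
      Matrix.one_apply, Matrix.diagonal_apply, smul_eq_mul, add_mul, ite_mul,
      Finset.sum_add_distrib, Finset.sum_ite_eq, mul_assoc]
  have hterm : ∀ i, ((starRingEnd ℂ) (v i) *
      ((L.map (fun x => (x : ℂ)) + (h : ℂ) • 1
        + Complex.I • Matrix.diagonal (fun i => (α i : ℂ))) *ᵥ v) i).re
      = (∑ j, L i j * ((v i).re * (v j).re + (v i).im * (v j).im))
        + h * Complex.normSq (v i) := by
    intro i
    rw [hrow i, mul_add, mul_add, Complex.add_re, Complex.add_re, Finset.mul_sum,
      Complex.re_sum]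
    have h1 : ∀ j, ((starRingEnd ℂ) (v i) * ((L i j : ℂ) * v j)).re
        = L i j * ((v i).re * (v j).re + (v i).im * (v j).im) := by
      intro j
      simp only [Complex.mul_re, Complex.mul_im, Complex.conj_re, Complex.conj_im,
        Complex.ofReal_re, Complex.ofReal_im]
      ring
    have h2 : ((starRingEnd ℂ) (v i) * ((h:ℂ) * v i)).re = h * Complex.normSq (v i) := by
      simp only [Complex.mul_re, Complex.mul_im, Complex.conj_re, Complex.conj_im,
        Complex.ofReal_re, Complex.ofReal_im, Complex.normSq_apply]
      ring
    have h3 : ((starRingEnd ℂ) (v i) * (Complex.I * (α i : ℂ) * v i)).re = 0 := by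
      simp only [Complex.mul_re, Complex.mul_im, Complex.conj_re, Complex.conj_im,
        Complex.ofReal_re, Complex.ofReal_im, Complex.I_re, Complex.I_im]
      ring
    rw [h3, h2, add_zero, Finset.sum_congr rfl (fun j _ => h1 j)]
  rw [Complex.re_sum, Finset.sum_congr rfl (fun i _ => hterm i),
    Finset.sum_add_distrib, Finset.mul_sum]

/-- If `Re((h²/N) Σᵢⱼ (L+hI+iα)⁻²ᵢⱼ) = 1` then `Re((h/N) Σᵢⱼ (L+hI+iα)⁻¹ᵢⱼ) = 1`. -/
theorem stationarity_first_consequence (N : ℕ) (hN : 0 < N)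
    (L : Matrix (Fin N) (Fin N) ℝ) (hLsymm : L.IsSymm) (hLpsd : L.PosSemidef)
    (h : ℝ) (hh : 0 < h) (α : Fin N → ℝ)
    (hyp : (((h : ℂ) ^ 2 / (N : ℂ)) * ∑ i, ∑ j,
        (((L.map (fun x => (x : ℂ)) + (h : ℂ) • 1
            + Complex.I • Matrix.diagonal (fun i => (α i : ℂ)))⁻¹
          * (L.map (fun x => (x : ℂ)) + (h : ℂ) • 1
            + Complex.I • Matrix.diagonal (fun i => (α i : ℂ)))⁻¹) i j)).re = 1) :
    (((h : ℂ) / (N : ℂ)) * ∑ i, ∑ j,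
        (L.map (fun x => (x : ℂ)) + (h : ℂ) • 1
          + Complex.I • Matrix.diagonal (fun i => (α i : ℂ)))⁻¹ i j).re = 1 := by
  set K := L.map (fun x => (x : ℂ)) + (h : ℂ) • 1
      + Complex.I • Matrix.diagonal (fun i => (α i : ℂ)) with hKdef
  have hNR : (0:ℝ) < N := by exact_mod_cast hN
  -- positive semidefiniteness in double-sum form
  have hpsd : ∀ u : Fin N → ℝ, 0 ≤ ∑ i, ∑ j, L i j * (u i * u j) := by
    intro u
    have h0 := hLpsd.dotProduct_mulVec_nonneg u
    have e : star u ⬝ᵥ (L *ᵥ u) = ∑ i, ∑ j, L i j * (u i * u j) := by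
      simp only [dotProduct, mulVec, Pi.star_apply, star_trivial, Finset.mul_sum]
      exact Finset.sum_congr rfl fun i _ => Finset.sum_congr rfl fun j _ => by ring
    rw [e] at h0; exact h0
  have hpsd2 : ∀ v : Fin N → ℂ,
      0 ≤ ∑ i, ∑ j, L i j * ((v i).re * (v j).re + (v i).im * (v j).im) := by
    intro v
    have e : ∑ i, ∑ j, L i j * ((v i).re * (v j).re + (v i).im * (v j).im)
        = (∑ i, ∑ j, L i j * ((v i).re * (v j).re))
          + ∑ i, ∑ j, L i j * ((v i).im * (v j).im) := by
      rw [← Finset.sum_add_distrib]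
      exact Finset.sum_congr rfl fun i _ => by
        rw [← Finset.sum_add_distrib]
        exact Finset.sum_congr rfl fun j _ => by ring
    rw [e]
    exact add_nonneg (hpsd _) (hpsd _)
  -- invertibility
  have hdet : IsUnit K.det := by
    rw [isUnit_iff_ne_zero]
    intro hd
    rw [← Matrix.exists_mulVec_eq_zero_iff] at hd
    obtain ⟨v, hv0, hKv⟩ := hd
    have hq := quad_aux N L h α v
    rw [← hKdef, hKv] at hq
    simp only [Pi.zero_apply, mul_zero, Finset.sum_const_zero, Complex.zero_re] at hq
    have hns : 0 < ∑ i, Complex.normSq (v i) := by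
      obtain ⟨i, hi⟩ := Function.ne_iff.mp hv0
      exact Finset.sum_pos' (fun j _ => Complex.normSq_nonneg _)
        ⟨i, Finset.mem_univ i, Complex.normSq_pos.mpr hi⟩
    nlinarith [hpsd2 v]
  -- the vector w
  set w : Fin N → ℂ := fun i => ∑ j, K⁻¹ i j with hwdef
  have hwmv : w = K⁻¹ *ᵥ (fun _ => 1) := by
    funext i; simp [hwdef, mulVec, dotProduct]
  have hKw : K *ᵥ w = fun _ => (1:ℂ) := by
    rw [hwmv, mulVec_mulVec, Matrix.mul_nonsing_inv _ hdet, one_mulVec]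
  -- symmetry
  have hKsym : Kᵀ = K := by
    rw [hKdef]
    simp only [Matrix.transpose_add, Matrix.transpose_smul, Matrix.transpose_one,
      Matrix.diagonal_transpose, Matrix.transpose_map, hLsymm.eq]
    congr 1
    ext i j
    simp [Matrix.transpose_apply, Matrix.map_apply, hLsymm.apply]
  have hKisym : (K⁻¹)ᵀ = K⁻¹ := by
    rw [Matrix.transpose_nonsing_inv, hKsym]
  have colsum : ∀ k, ∑ i, K⁻¹ i k = w k := by
    intro k
    have : ∀ i, K⁻¹ i k = K⁻¹ k i := by
      intro i
      conv_lhs => rw [← hKisym]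
      rfl
    rw [Finset.sum_congr rfl fun i _ => this i]
  -- the double sum identity
  have S2 : (∑ i, ∑ j, (K⁻¹ * K⁻¹) i j) = ∑ k, w k * w k := by
    simp only [Matrix.mul_apply]
    calc ∑ i, ∑ j, ∑ k, K⁻¹ i k * K⁻¹ k j
        = ∑ i, ∑ k, K⁻¹ i k * ∑ j, K⁻¹ k j := by
          refine Finset.sum_congr rfl fun i _ => ?_
          rw [Finset.sum_comm]
          exact Finset.sum_congr rfl fun k _ => (Finset.mul_sum _ _ _).symm
      _ = ∑ k, (∑ i, K⁻¹ i k) * ∑ j, K⁻¹ k j := by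
          rw [Finset.sum_comm]
          exact Finset.sum_congr rfl fun k _ => (Finset.sum_mul _ _ _).symm
      _ = ∑ k, w k * w k := by
          exact Finset.sum_congr rfl fun k _ => by rw [colsum k]
  -- real and imaginary parts
  set x : Fin N → ℝ := fun i => (w i).re with hxdef
  set y : Fin N → ℝ := fun i => (w i).im with hydef
  -- hypothesis in real form
  have hyp' : h^2 / N * (∑ k, (x k ^ 2 - y k ^ 2)) = 1 := by
    rw [S2] at hyp
    have e1 : ((h:ℂ)^2 / (N:ℂ)) = ((h^2 / N : ℝ) : ℂ) := by push_cast; ring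
    rw [e1, Complex.re_ofReal_mul, Complex.re_sum] at hyp
    convert hyp using 2
    refine (Finset.sum_congr rfl fun k _ => ?_)
    simp [Complex.mul_re, hxdef, hydef]
    ring
  -- quadratic identity for w
  have hq := quad_aux N L h α w
  rw [← hKdef, hKw] at hq
  have hlhs : (∑ i, (starRingEnd ℂ) (w i) * (1:ℂ)).re = ∑ i, x i := by
    rw [Complex.re_sum]
    exact Finset.sum_congr rfl fun i _ => by simp [hxdef]
  rw [hlhs] at hq
  -- final real arithmetic
  have hQ := hpsd2 w
  have hsx : ∀ i, Complex.normSq (w i) = x i ^ 2 + y i ^ 2 := by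
    intro i; simp [Complex.normSq_apply, hxdef, hydef]; ring
  rw [Finset.sum_congr rfl fun i _ => hsx i] at hq
  set T := ∑ i, x i with hT
  set sx := ∑ i, x i ^ 2 with hsxd
  set sy := ∑ i, y i ^ 2 with hsyd
  have hsplit : ∑ i, (x i ^ 2 + y i ^ 2) = sx + sy := Finset.sum_add_distrib
  rw [hsplit] at hq
  have hsynn : 0 ≤ sy := Finset.sum_nonneg fun i _ => sq_nonneg _
  have hsxnn : 0 ≤ sx := Finset.sum_nonneg fun i _ => sq_nonneg _
  have hG : h^2 * (sx - sy) = N := by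
    have : ∑ k, (x k ^ 2 - y k ^ 2) = sx - sy := by
      rw [hsxd, hsyd, ← Finset.sum_sub_distrib]
    rw [this] at hyp'
    field_simp at hyp'
    linarith [hyp']
  have hCS : T ^ 2 ≤ N * sx := by
    have := Finset.sum_mul_sq_le_sq_mul_sq Finset.univ x (fun _ => (1:ℝ))
    simp at this
    calc T^2 = (∑ i, x i * 1)^2 := by simp [hT]
      _ ≤ (∑ i : Fin N, x i ^ 2) * ∑ i : Fin N, (1:ℝ)^2 :=
          Finset.sum_mul_sq_le_sq_mul_sq Finset.univ x (fun _ => (1:ℝ))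
      _ = N * sx := by simp [hsxd, mul_comm]
  -- hq : T = Q + h * (sx + sy) with Q ≥ 0
  have hst1 : (N:ℝ) ≤ h * T := by nlinarith
  have hst2 : h * T ≤ N := by
    have k1 : h^2 * sx ≤ h * T := by nlinarith
    have k2 : (h*T)^2 ≤ N * (h*T) := by nlinarith
    nlinarith
  have hfin : h * T = N := le_antisymm hst2 hst1
  -- conclude
  have egoal : (∑ i, ∑ j, K⁻¹ i j) = ∑ i, w i := rfl
  rw [egoal]
  have e1 : ((h:ℂ) / (N:ℂ)) = ((h / N : ℝ) : ℂ) := by push_cast; ring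
  rw [e1, Complex.re_ofReal_mul, Complex.re_sum]
  have : ∑ i, (w i).re = T := rfl
  rw [this]
  rw [div_mul_eq_mul_div, hfin]
  exact div_self (ne_of_gt hNR)
end

section
/- Assume additionally that the columns of L sum to zero, i.e. Σ_{i=1}^N L_{ij} = 0 for every j (as holds for graph Laplacians). If Re( (h/N) Σ_{i,j=1}^N (L + hI + iα)^{-1}_{ij} ) = 1, then Re( Σ_{i,j=1}^N α_i (L + hI + iα)^{-1}_{ij} α_j ) = 0, and consequently α_i = 0 for every i. -/
open Matrix BigOperators

lemma aux_real (N : ℕ) (L : Matrix (Fin N) (Fin N) ℝ) (hLpsd : L.PosSemidef)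
    (h : ℝ) (hh : 0 < h) (α y p q : Fin N → ℝ)
    (h1 : ∀ i, (∑ j, L i j * p j) + h * p i - α i * q i = y i)
    (h2 : ∀ i, (∑ j, L i j * q j) + h * q i + α i * p i = 0)
    (h3 : ∑ i, y i * p i = 0) :
    (∀ i, p i = 0) ∧ (∀ i, q i = 0) := by
  have hS1 : 0 ≤ ∑ i, p i * ∑ j, L i j * p j := by
    have := hLpsd.dotProduct_mulVec_nonneg p
    simpa [dotProduct, Matrix.mulVec] using this
  have hS2 : 0 ≤ ∑ i, q i * ∑ j, L i j * q j := by
    have := hLpsd.dotProduct_mulVec_nonneg q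
    simpa [dotProduct, Matrix.mulVec] using this
  have e1 : ∑ i, y i * p i =
      (∑ i, p i * ∑ j, L i j * p j) + h * ∑ i, p i ^ 2 - ∑ i, α i * (q i * p i) := by
    rw [Finset.mul_sum, ← Finset.sum_add_distrib, ← Finset.sum_sub_distrib]
    refine Finset.sum_congr rfl fun i _ => ?_
    rw [← h1 i]; ring
  have e2 : (0:ℝ) =
      (∑ i, q i * ∑ j, L i j * q j) + h * ∑ i, q i ^ 2 + ∑ i, α i * (q i * p i) := by
    have : ∑ i, (((∑ j, L i j * q j) + h * q i + α i * p i) * q i) = 0 := by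
      simp [h2]
    rw [← this, Finset.mul_sum, ← Finset.sum_add_distrib, ← Finset.sum_add_distrib]
    refine Finset.sum_congr rfl fun i _ => ?_
    ring
  have hp2 : 0 ≤ ∑ i, p i ^ 2 := Finset.sum_nonneg fun i _ => sq_nonneg _
  have hq2 : 0 ≤ ∑ i, q i ^ 2 := Finset.sum_nonneg fun i _ => sq_nonneg _
  have hps : ∑ i, p i ^ 2 = 0 := by nlinarith
  have hqs : ∑ i, q i ^ 2 = 0 := by nlinarith
  constructor
  · intro i
    have := (Finset.sum_eq_zero_iff_of_nonneg (fun i _ => sq_nonneg (p i))).1 hps i (Finset.mem_univ i)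
    exact pow_eq_zero_iff (by norm_num) |>.1 this
  · intro i
    have := (Finset.sum_eq_zero_iff_of_nonneg (fun i _ => sq_nonneg (q i))).1 hqs i (Finset.mem_univ i)
    exact pow_eq_zero_iff (by norm_num) |>.1 this


/-- If the columns of `L` sum to zero and `Re((h/N) Σᵢⱼ (L+hI+iα)⁻¹ᵢⱼ) = 1`, then
`Re(Σᵢⱼ αᵢ (L+hI+iα)⁻¹ᵢⱼ αⱼ) = 0` and consequently `α = 0`. -/
theorem stationarity_forces_alpha_zero (N : ℕ) (hN : 0 < N)
    (L : Matrix (Fin N) (Fin N) ℝ) (hLsymm : L.IsSymm) (hLpsd : L.PosSemidef)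
    (hLcol : ∀ j, ∑ i, L i j = 0)
    (h : ℝ) (hh : 0 < h) (α : Fin N → ℝ)
    (hyp : (((h : ℂ) / (N : ℂ)) * ∑ i, ∑ j,
        (L.map (fun x => (x : ℂ)) + (h : ℂ) • 1
          + Complex.I • Matrix.diagonal (fun i => (α i : ℂ)))⁻¹ i j).re = 1) :
    (∑ i, ∑ j, (α i : ℂ) *
        ((L.map (fun x => (x : ℂ)) + (h : ℂ) • 1
          + Complex.I • Matrix.diagonal (fun i => (α i : ℂ)))⁻¹ i j) * (α j : ℂ)).re = 0
    ∧ ∀ i, α i = 0 := by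
  set M : Matrix (Fin N) (Fin N) ℂ := L.map (fun x => (x : ℂ)) + (h : ℂ) • 1
          + Complex.I • Matrix.diagonal (fun i => (α i : ℂ)) with hMdef
  have hMentry : ∀ i j, M i j = (L i j : ℂ) + (h:ℂ) * (if i = j then 1 else 0)
      + Complex.I * (if i = j then (α i : ℂ) else 0) := by
    intro i j
    simp [hMdef, Matrix.add_apply, Matrix.smul_apply, Matrix.one_apply,
      Matrix.diagonal_apply, Matrix.map_apply, smul_eq_mul, mul_ite]
  have hLrow : ∀ i, ∑ j, L i j = 0 := by
    intro i
    rw [← hLcol i]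
    exact Finset.sum_congr rfl fun j _ => hLsymm.apply j i
  -- componentwise form of M *ᵥ w
  have hmv : ∀ (w : Fin N → ℂ) (i : Fin N), (M *ᵥ w) i =
      (∑ j, (L i j : ℂ) * w j) + ((h:ℂ) * w i + Complex.I * (α i : ℂ) * w i) := by
    intro w i
    have hterm : ∀ j, M i j * w j =
        (L i j : ℂ) * w j + (if j = i then ((h:ℂ) * w i + Complex.I * (α i:ℂ) * w i) else 0) := by
      intro j
      rw [hMentry]
      by_cases hij : i = j
      · subst hij; simp; ring
      · simp [hij, Ne.symm hij]
    simp only [Matrix.mulVec, dotProduct]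
    rw [Finset.sum_congr rfl fun j _ => hterm j, Finset.sum_add_distrib,
      Finset.sum_ite_eq' Finset.univ i]
    simp
  have hre : ∀ (w : Fin N → ℂ) (i : Fin N),
      ((M *ᵥ w) i).re = (∑ j, L i j * (w j).re) + h * (w i).re - α i * (w i).im := by
    intro w i
    rw [hmv]
    simp [Complex.add_re, Complex.re_sum, Complex.mul_re, Complex.mul_im]
    ring
  have him : ∀ (w : Fin N → ℂ) (i : Fin N),
      ((M *ᵥ w) i).im = (∑ j, L i j * (w j).im) + h * (w i).im + α i * (w i).re := by
    intro w i
    rw [hmv]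
    simp [Complex.add_im, Complex.im_sum, Complex.mul_re, Complex.mul_im]
    ring
  -- M is invertible
  have hdet : M.det ≠ 0 := by
    intro hdet0
    obtain ⟨w, hw0, hw⟩ := (Matrix.exists_mulVec_eq_zero_iff).2 hdet0
    have h1 : ∀ i, (∑ j, L i j * (w j).re) + h * (w i).re - α i * (w i).im = 0 := by
      intro i
      have h0 : ((M *ᵥ w) i).re = 0 := by rw [hw]; simp
      rw [hre w i] at h0; exact h0
    have h2 : ∀ i, (∑ j, L i j * (w j).im) + h * (w i).im + α i * (w i).re = 0 := by
      intro i
      have h0 : ((M *ᵥ w) i).im = 0 := by rw [hw]; simp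
      rw [him w i] at h0; exact h0
    obtain ⟨hp, hq⟩ := aux_real N L hLpsd h hh α (fun _ => 0)
      (fun i => (w i).re) (fun i => (w i).im) h1 h2 (by simp)
    apply hw0
    funext i
    exact Complex.ext (hp i) (hq i)
  have hunit : IsUnit M.det := isUnit_iff_ne_zero.2 hdet
  have hMinv : M⁻¹ * M = 1 := Matrix.nonsing_inv_mul M hunit
  have hMinv' : M * M⁻¹ = 1 := Matrix.mul_nonsing_inv M hunit
  set v : Fin N → ℂ := M⁻¹ *ᵥ (fun _ => 1) with hvdef
  have hv : M *ᵥ v = fun _ => 1 := by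
    rw [hvdef, Matrix.mulVec_mulVec, hMinv', Matrix.one_mulVec]
  set S : ℂ := ∑ i, v i with hSdef
  have hSsum : ∑ i, ∑ j, M⁻¹ i j = S := by
    rw [hSdef]
    refine Finset.sum_congr rfl fun i _ => ?_
    simp [hvdef, Matrix.mulVec, dotProduct]
  have hLsum0 : ∀ j, ∑ i, (L i j : ℂ) = 0 := by
    intro j
    have := hLcol j
    exact_mod_cast congrArg (fun r : ℝ => (r:ℂ)) this
  have hLsum0' : ∀ i, ∑ j, (L i j : ℂ) = 0 := by
    intro i
    have := hLrow i
    exact_mod_cast congrArg (fun r : ℝ => (r:ℂ)) this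
  have hMcol : ∀ j, ∑ i, M i j = (h:ℂ) + Complex.I * α j := by
    intro j
    simp only [hMentry]
    rw [Finset.sum_add_distrib, Finset.sum_add_distrib, hLsum0 j]
    simp [mul_ite, Finset.sum_ite_eq' Finset.univ j]
  have hMrow : ∀ i, ∑ j, M i j = (h:ℂ) + Complex.I * α i := by
    intro i
    simp only [hMentry]
    rw [Finset.sum_add_distrib, Finset.sum_add_distrib, hLsum0' i]
    simp [mul_ite, Finset.sum_ite_eq Finset.univ i]
  have key1 : (h:ℂ) * S + Complex.I * ∑ j, (α j:ℂ) * v j = (N:ℂ) := by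
    have e : ∑ i, (M *ᵥ v) i = (N:ℂ) := by rw [hv]; simp
    calc (h:ℂ) * S + Complex.I * ∑ j, (α j:ℂ) * v j
        = ∑ j, ((h:ℂ) + Complex.I * (α j:ℂ)) * v j := by
          rw [hSdef, Finset.mul_sum, Finset.mul_sum, ← Finset.sum_add_distrib]
          exact Finset.sum_congr rfl fun j _ => by ring
      _ = ∑ j, (∑ i, M i j) * v j :=
          Finset.sum_congr rfl fun j _ => by rw [hMcol j]
      _ = ∑ j, ∑ i, M i j * v j :=
          Finset.sum_congr rfl fun j _ => Finset.sum_mul _ _ _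
      _ = ∑ i, (M *ᵥ v) i := by
          rw [Finset.sum_comm]
          exact Finset.sum_congr rfl fun i _ => by
            simp [Matrix.mulVec, dotProduct]
      _ = (N:ℂ) := e
  set u : Fin N → ℂ := fun i => Complex.I * h * v i - Complex.I with hudef
  have hu : M *ᵥ u = fun i => (α i : ℂ) := by
    funext i
    have h1 : (M *ᵥ u) i = Complex.I * h * (∑ j, M i j * v j) - Complex.I * (∑ j, M i j) := by
      simp only [Matrix.mulVec, dotProduct, hudef]
      rw [Finset.mul_sum, Finset.mul_sum, ← Finset.sum_sub_distrib]
      exact Finset.sum_congr rfl fun j _ => by ring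
    have h2 : (∑ j, M i j * v j) = 1 := by
      have := congrFun hv i
      simpa [Matrix.mulVec, dotProduct] using this
    rw [h1, h2, hMrow i]
    have : Complex.I * Complex.I = -1 := Complex.I_mul_I
    linear_combination (-(α i : ℂ)) * this
  have huinv : M⁻¹ *ᵥ (fun i => (α i:ℂ)) = u := by
    rw [← hu, Matrix.mulVec_mulVec, hMinv, Matrix.one_mulVec]
  have hQ : ∑ i, ∑ j, (α i : ℂ) * (M⁻¹ i j) * (α j:ℂ) = ∑ i, (α i:ℂ) * u i := by
    refine Finset.sum_congr rfl fun i _ => ?_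
    have : u i = ∑ j, M⁻¹ i j * (α j:ℂ) := by
      rw [← congrFun huinv i]
      simp [Matrix.mulVec, dotProduct]
    rw [this, Finset.mul_sum]
    exact Finset.sum_congr rfl fun j _ => by ring
  have hQval : ∑ i, (α i:ℂ) * u i
      = (h:ℂ) * (N:ℂ) - (h:ℂ) * ((h:ℂ) * S) - Complex.I * ((∑ i, α i : ℝ) : ℂ) := by
    have hT : ((∑ i, α i : ℝ) : ℂ) = ∑ i, (α i : ℂ) := by push_cast; ring
    calc ∑ i, (α i:ℂ) * u i
        = Complex.I * h * (∑ i, (α i:ℂ) * v i) - Complex.I * ∑ i, (α i:ℂ) := by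
          simp only [hudef]
          rw [Finset.mul_sum, Finset.mul_sum, ← Finset.sum_sub_distrib]
          exact Finset.sum_congr rfl fun i _ => by ring
      _ = (h:ℂ) * (N:ℂ) - (h:ℂ) * ((h:ℂ) * S) - Complex.I * ((∑ i, α i : ℝ) : ℂ) := by
          rw [hT]
          linear_combination (h:ℂ) * key1
  have hSre : h * S.re = N := by
    have h1 : ((h:ℂ)/(N:ℂ)) = ((h / N : ℝ) : ℂ) := by push_cast; ring
    rw [hSsum, h1] at hyp
    have h2 : ((((h/N:ℝ)):ℂ) * S).re = (h/N) * S.re := by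
      simp [Complex.mul_re]
    rw [h2] at hyp
    have hN' : (N:ℝ) ≠ 0 := by positivity
    field_simp at hyp
    linarith
  have hQre : (∑ i, ∑ j, (α i : ℂ) * (M⁻¹ i j) * (α j:ℂ)).re = 0 := by
    rw [hQ, hQval]
    simp [Complex.sub_re, Complex.mul_re, Complex.ofReal_re, Complex.ofReal_im,
      Complex.I_re, Complex.I_im, Complex.natCast_re, Complex.natCast_im]
    have h4 : h * (h * S.re) = h * N := by rw [hSre]
    linarith
  refine ⟨hQre, ?_⟩
  -- now show α = 0
  have h1 : ∀ i, (∑ j, L i j * (u j).re) + h * (u i).re - α i * (u i).im = α i := by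
    intro i
    have h0 : ((M *ᵥ u) i).re = α i := by rw [hu]; simp
    rw [hre u i] at h0; exact h0
  have h2 : ∀ i, (∑ j, L i j * (u j).im) + h * (u i).im + α i * (u i).re = 0 := by
    intro i
    have h0 : ((M *ᵥ u) i).im = 0 := by rw [hu]; simp
    rw [him u i] at h0; exact h0
  have h3 : ∑ i, α i * (u i).re = 0 := by
    have : (∑ i, (α i:ℂ) * u i).re = ∑ i, α i * (u i).re := by
      rw [Complex.re_sum]
      exact Finset.sum_congr rfl fun i _ => by simp [Complex.mul_re]
    rw [hQ, this] at hQre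
    exact hQre
  obtain ⟨hp, hq⟩ := aux_real N L hLpsd h hh α α
    (fun i => (u i).re) (fun i => (u i).im) h1 h2 h3
  intro i
  have := h1 i
  simp only [hp, hq] at this
  simpa using this.symm
end
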